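/- arXiv:1407.1591 — 2 statements merged into one kernel-verified Lean document; each statement's English description precedes it below -/
import Mathlib

section
/- Let p_n, q_n be sequences in [0, 2/3] with p_n + q_n > 0 for all n. Then P(n, p_n, q_n) → 0 as n → ∞ if and only if n (p_n − q_n)^2 / (p_n + q_n) → ∞. -/
open Real Filter

/-- Probability that a Binomial(m, p) random variable equals `k`. -/
noncomputable def binomProb (m : ℕ) (p : ℝ) (k : ℕ) : ℝ :=
  (m.choose k : ℝ) * p ^ k * (1 - p) ^ (m - k)

/-- For independent `X ~ Binomial(m, p)` and `Y ~ Binomial(n, q)`,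
the probability `Pr(Y ≥ X - ℓ)`. -/
noncomputable def prGEshift (m : ℕ) (p : ℝ) (n : ℕ) (q : ℝ) (ℓ : ℝ) : ℝ :=
  ∑ j ∈ Finset.range (m + 1), ∑ k ∈ Finset.range (n + 1),
    if (j : ℝ) - ℓ ≤ (k : ℝ) then binomProb m p j * binomProb n q k else 0

/-- For independent `X ~ Binomial(m, p)` and `Y ~ Binomial(n, q)`,
the probability `Pr(Y ≥ X)`. -/
noncomputable def prGE (m : ℕ) (p : ℝ) (n : ℕ) (q : ℝ) : ℝ :=
  prGEshift m p n q 0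

/-- `P(m, n, p, q) = Pr(Y ≥ X)` for independent `X ~ Binomial(m, max p q)`
and `Y ~ Binomial(n, min p q)`. -/
noncomputable def Pmn (m n : ℕ) (p q : ℝ) : ℝ :=
  prGE m (max p q) n (min p q)

/-- `P(n, p, q) = P(n, n, p, q)`. -/
noncomputable def Pn (n : ℕ) (p q : ℝ) : ℝ :=
  Pmn n n p q

open Finset


lemma binomProb_nonneg (m : ℕ) {p : ℝ} (h0 : 0 ≤ p) (h1 : p ≤ 1) (k : ℕ) :
    0 ≤ binomProb m p k := by
  have : (0:ℝ) ≤ 1 - p := by linarith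
  unfold binomProb; positivity

lemma binom_sum (n : ℕ) (p : ℝ) : ∑ k ∈ range (n+1), binomProb n p k = 1 := by
  have h := add_pow p (1-p) n
  have : ∑ k ∈ range (n+1), binomProb n p k
      = ∑ k ∈ range (n+1), p ^ k * (1-p) ^ (n-k) * (n.choose k : ℝ) := by
    apply sum_congr rfl; intro k _; unfold binomProb; ring
  rw [this, ← h]
  norm_num

lemma binom_absorb (n : ℕ) (p : ℝ) (g : ℕ → ℝ) :
    ∑ k ∈ range (n+2), (k:ℝ) * g k * binomProb (n+1) p k
      = ((n:ℝ)+1) * p * ∑ i ∈ range (n+1), g (i+1) * binomProb n p i := by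
  rw [Finset.sum_range_succ', Finset.mul_sum]
  simp only [Nat.cast_zero, zero_mul, add_zero]
  apply sum_congr rfl
  intro i hi
  have hi' : i ≤ n := Nat.lt_succ_iff.mp (mem_range.mp hi)
  have hc : (((n+1).choose (i+1) : ℕ) : ℝ) * ((i:ℝ)+1) = ((n:ℝ)+1) * (n.choose i : ℝ) := by
    have := Nat.add_one_mul_choose_eq n i
    have h2 : ((n+1) * n.choose i : ℕ) = ((n+1).choose (i+1) * (i+1) : ℕ) := this
    exact_mod_cast h2.symm
  unfold binomProb
  have hsub : n + 1 - (i+1) = n - i := by omega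
  rw [hsub]
  push_cast
  linear_combination (g (i + 1) * p ^ (i + 1) * (1 - p) ^ (n - i)) * hc

lemma binom_mean (n : ℕ) (p : ℝ) :
    ∑ k ∈ range (n+1), (k:ℝ) * binomProb n p k = n * p := by
  cases n with
  | zero => simp
  | succ m =>
    have h := binom_absorb m p (fun _ => 1)
    simp only [mul_one, one_mul] at h
    rw [h, binom_sum]
    push_cast; ring

lemma binom_fac2 (n : ℕ) (p : ℝ) :
    ∑ k ∈ range (n+1), (k:ℝ) * ((k:ℝ) - 1) * binomProb n p k
      = (n:ℝ) * ((n:ℝ) - 1) * p^2 := by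
  match n with
  | 0 => simp
  | 1 =>
    rw [show (1:ℕ)+1 = 2 by rfl, Finset.sum_range_succ, Finset.sum_range_succ]
    norm_num
  | (m+2) =>
    have h := binom_absorb (m+1) p (fun k => (k:ℝ) - 1)
    have h2 : ∑ i ∈ range (m+2), (((i:ℕ)+1:ℝ) - 1) * binomProb (m+1) p i
        = ∑ i ∈ range (m+2), (i:ℝ) * binomProb (m+1) p i := by
      apply sum_congr rfl; intro i _; push_cast; ring
    have h3 := binom_mean (m+1) p
    push_cast at h h2 h3 ⊢
    rw [h, h2, h3]
    ring

lemma binom_var (n : ℕ) (p : ℝ) :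
    ∑ k ∈ range (n+1), ((k:ℝ) - n*p)^2 * binomProb n p k = n * p * (1-p) := by
  have e : ∀ k ∈ range (n+1), ((k:ℝ) - n*p)^2 * binomProb n p k
      = (k:ℝ) * ((k:ℝ) - 1) * binomProb n p k
        + (1 - 2*(n:ℝ)*p) * ((k:ℝ) * binomProb n p k)
        + ((n:ℝ)*p)^2 * binomProb n p k := by
    intro k _; ring
  rw [Finset.sum_congr rfl e, Finset.sum_add_distrib, Finset.sum_add_distrib,
    ← Finset.mul_sum, ← Finset.mul_sum, binom_fac2, binom_mean, binom_sum]
  ring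

lemma binom_cmean (n : ℕ) (p : ℝ) :
    ∑ k ∈ range (n+1), ((k:ℝ) - n*p) * binomProb n p k = 0 := by
  have e : ∀ k ∈ range (n+1), ((k:ℝ) - n*p) * binomProb n p k
      = (k:ℝ) * binomProb n p k - (n:ℝ)*p * binomProb n p k := by
    intro k _; ring
  rw [Finset.sum_congr rfl e, Finset.sum_sub_distrib, ← Finset.mul_sum, binom_mean, binom_sum]
  ring



lemma prGE_nonneg {m n : ℕ} {P Q : ℝ} (hP0 : 0 ≤ P) (hP1 : P ≤ 1)
    (hQ0 : 0 ≤ Q) (hQ1 : Q ≤ 1) : 0 ≤ prGE m P n Q := by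
  unfold prGE prGEshift
  apply Finset.sum_nonneg; intro j _
  apply Finset.sum_nonneg; intro k _
  split
  · exact mul_nonneg (binomProb_nonneg m hP0 hP1 j) (binomProb_nonneg n hQ0 hQ1 k)
  · exact le_refl 0

/-- The second moment of the difference, conditional on nothing: key identity. -/
lemma double_sum_sq (n : ℕ) (P Q : ℝ) :
    ∑ j ∈ range (n+1), ∑ k ∈ range (n+1),
      binomProb n P j * binomProb n Q k * (((k:ℝ) - n*Q) - ((j:ℝ) - n*P))^2
    = (n:ℝ) * P * (1-P) + (n:ℝ) * Q * (1-Q) := by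
  have inner : ∀ j ∈ range (n+1),
      ∑ k ∈ range (n+1), binomProb n P j * binomProb n Q k * (((k:ℝ) - n*Q) - ((j:ℝ) - n*P))^2
      = binomProb n P j * ((n:ℝ)*Q*(1-Q) + ((j:ℝ) - n*P)^2) := by
    intro j _
    have e : ∀ k ∈ range (n+1),
        binomProb n P j * binomProb n Q k * (((k:ℝ) - n*Q) - ((j:ℝ) - n*P))^2
        = binomProb n P j * ( ((k:ℝ) - n*Q)^2 * binomProb n Q k
            - (2*((j:ℝ) - n*P)) * (((k:ℝ) - n*Q) * binomProb n Q k)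
            + ((j:ℝ) - n*P)^2 * binomProb n Q k) := by
      intro k _; ring
    rw [Finset.sum_congr rfl e, ← Finset.mul_sum]
    congr 1
    rw [Finset.sum_add_distrib, Finset.sum_sub_distrib, ← Finset.mul_sum, ← Finset.mul_sum,
      binom_var, binom_cmean, binom_sum]
    ring
  rw [Finset.sum_congr rfl inner]
  have e2 : ∀ j ∈ range (n+1),
      binomProb n P j * ((n:ℝ)*Q*(1-Q) + ((j:ℝ) - n*P)^2)
      = (n:ℝ)*Q*(1-Q) * binomProb n P j + ((j:ℝ) - n*P)^2 * binomProb n P j := by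
    intro j _; ring
  rw [Finset.sum_congr rfl e2, Finset.sum_add_distrib, ← Finset.mul_sum, binom_var, binom_sum]
  ring

lemma prGE_le_cheb {n : ℕ} {P Q : ℝ} (hP0 : 0 ≤ P) (hP1 : P ≤ 1)
    (hQ0 : 0 ≤ Q) (hQ1 : Q ≤ 1) (hlt : Q < P) (hn : 0 < n) :
    prGE n P n Q ≤ (P + Q) / ((n:ℝ) * (P - Q)^2) := by
  set D : ℝ := (n:ℝ) * (P - Q) with hD
  have hDpos : 0 < D := by
    apply mul_pos (by exact_mod_cast hn)
    linarith
  have step1 : prGE n P n Q ≤ (1/D^2) *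
      ∑ j ∈ range (n+1), ∑ k ∈ range (n+1),
        binomProb n P j * binomProb n Q k * (((k:ℝ) - n*Q) - ((j:ℝ) - n*P))^2 := by
    unfold prGE prGEshift
    rw [Finset.mul_sum]
    apply Finset.sum_le_sum; intro j _
    rw [Finset.mul_sum]
    apply Finset.sum_le_sum; intro k _
    have hb : 0 ≤ binomProb n P j * binomProb n Q k :=
      mul_nonneg (binomProb_nonneg n hP0 hP1 j) (binomProb_nonneg n hQ0 hQ1 k)
    split
    · rename_i h
      have hkj : (0:ℝ) ≤ (k:ℝ) - (j:ℝ) := by linarith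
      have hident : ((k:ℝ) - n*Q) - ((j:ℝ) - n*P) = ((k:ℝ) - (j:ℝ)) + D := by
        rw [hD]; ring
      have hsq : D^2 ≤ (((k:ℝ) - n*Q) - ((j:ℝ) - n*P))^2 := by
        rw [hident]
        nlinarith [hDpos]
      calc binomProb n P j * binomProb n Q k
          = (1/D^2) * (binomProb n P j * binomProb n Q k * D^2) := by
            field_simp
        _ ≤ (1/D^2) * (binomProb n P j * binomProb n Q k *
              (((k:ℝ) - n*Q) - ((j:ℝ) - n*P))^2) := by
            apply mul_le_mul_of_nonneg_left _ (by positivity)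
            exact mul_le_mul_of_nonneg_left hsq hb
    · positivity
  rw [double_sum_sq] at step1
  have hvar : (n:ℝ) * P * (1-P) + (n:ℝ) * Q * (1-Q) ≤ (n:ℝ) * (P + Q) := by
    have hn0 : (0:ℝ) ≤ (n:ℝ) := Nat.cast_nonneg n
    nlinarith [mul_nonneg hn0 (mul_nonneg hP0 hP0), mul_nonneg hn0 (mul_nonneg hQ0 hQ0)]
  have : (1/D^2) * ((n:ℝ) * P * (1-P) + (n:ℝ) * Q * (1-Q)) ≤ (1/D^2) * ((n:ℝ)*(P+Q)) := by
    apply mul_le_mul_of_nonneg_left hvar (by positivity)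
  have hn' : (n:ℝ) ≠ 0 := ne_of_gt (by exact_mod_cast hn)
  have hpq : P - Q ≠ 0 := ne_of_gt (by linarith)
  have heq : (1/D^2) * ((n:ℝ)*(P+Q)) = (P + Q) / ((n:ℝ) * (P - Q)^2) := by
    rw [hD]
    have h1 : ((n:ℝ) * (P - Q))^2 ≠ 0 := by
      apply pow_ne_zero; exact mul_ne_zero hn' hpq
    have h2 : (n:ℝ) * (P - Q)^2 ≠ 0 := by
      apply mul_ne_zero hn'; exact pow_ne_zero 2 hpq
    field_simp
  linarith [step1, this, heq ▸ this]

lemma exp_neg_le_one_sub {x : ℝ} (h0 : 0 ≤ x) (h2 : x ≤ 1/2) :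
    Real.exp (-(2*x)) ≤ 1 - x := by
  have h1 : (1:ℝ) + 2*x ≤ Real.exp (2*x) := by
    have := Real.add_one_le_exp (2*x); linarith
  have hpos : (0:ℝ) < 1 + 2*x := by linarith
  have hexp : Real.exp (-(2*x)) = 1 / Real.exp (2*x) := by
    rw [Real.exp_neg]; ring
  rw [hexp]
  have : 1 / Real.exp (2*x) ≤ 1 / (1 + 2*x) := by
    apply one_div_le_one_div_of_le hpos h1
  have h3 : 1 / (1 + 2*x) ≤ 1 - x := by
    rw [div_le_iff₀ hpos]
    nlinarith
  linarith

lemma exp_neg_le_inv_one_add {v : ℝ} (h0 : 0 ≤ v) :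
    Real.exp (-v) ≤ 1 / (1 + v) := by
  have h1 : (1:ℝ) + v ≤ Real.exp v := by
    have := Real.add_one_le_exp v; linarith
  have hpos : (0:ℝ) < 1 + v := by linarith
  rw [Real.exp_neg]
  rw [inv_eq_one_div]
  apply one_div_le_one_div_of_le hpos h1

lemma exp_neg_three_le {P : ℝ} (h0 : 0 ≤ P) (h1 : P ≤ 2/3) :
    Real.exp (-(3*P)) ≤ 1 - P := by
  by_cases hc : P ≤ 1/2
  · have := exp_neg_le_one_sub h0 hc
    have hmono : Real.exp (-(3*P)) ≤ Real.exp (-(2*P)) := by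
      apply Real.exp_le_exp.mpr; linarith
    linarith
  · push_neg at hc
    have hmono : Real.exp (-(3*P)) ≤ Real.exp (-(3/2)) := by
      apply Real.exp_le_exp.mpr; linarith
    have h32 : Real.exp (-(3/2:ℝ)) ≤ 1/3 := by
      have hq : ((3:ℝ)) ≤ Real.exp (3/2) := by
        have h34 : (1:ℝ) + 3/4 ≤ Real.exp (3/4) := by
          have := Real.add_one_le_exp (3/4 : ℝ); linarith
        have hsq : Real.exp (3/2 : ℝ) = Real.exp (3/4) * Real.exp (3/4) := by
          rw [← Real.exp_add]; norm_num
        nlinarith [Real.exp_pos (3/4 : ℝ)]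
      rw [Real.exp_neg]
      rw [inv_le_comm₀ (Real.exp_pos _) (by norm_num)]
      simpa using hq
    linarith

lemma binomProb_zero (n : ℕ) (p : ℝ) : binomProb n p 0 = (1-p)^n := by
  simp [binomProb]

lemma binom_step (n k : ℕ) (hk : k < n) (p : ℝ) :
    binomProb n p (k+1) * (((k:ℝ)+1) * (1-p)) = binomProb n p k * (((n:ℝ)-(k:ℝ)) * p) := by
  unfold binomProb
  have hc : (n.choose (k+1) : ℝ) * ((k:ℝ)+1) = (n.choose k : ℝ) * ((n:ℝ)-(k:ℝ)) := by
    have h := Nat.choose_succ_right_eq n k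
    have h2 : (n.choose (k+1) * (k+1) : ℕ) = (n.choose k * (n - k) : ℕ) := h
    have h3 : ((n.choose (k+1) * (k+1) : ℕ) : ℝ) = ((n.choose k * (n - k) : ℕ) : ℝ) := by
      exact_mod_cast h2
    push_cast [Nat.cast_sub (le_of_lt hk)] at h3
    linarith [h3]
  have hsub : n - k = (n - (k+1)) + 1 := by omega
  rw [hsub]
  linear_combination (p^(k+1) * (1-p)^(n-(k+1)) * (1-p)) * hc

lemma binom_chain {n : ℕ} {Q ρ : ℝ} (hQ0 : 0 ≤ Q) (hQ1 : Q < 1) (hρ : 0 ≤ ρ)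
    (k₀ : ℕ) (J : ℕ) (htop : k₀ + J ≤ n)
    (hstep : ∀ i : ℕ, i < J → ρ * (((k₀+i : ℕ):ℝ)+1) * (1-Q) ≤ ((n:ℝ)-((k₀+i : ℕ):ℝ)) * Q) :
    binomProb n Q k₀ * ρ^J ≤ binomProb n Q (k₀+J) := by
  induction J with
  | zero => simp
  | succ m ih =>
    have htop' : k₀ + m ≤ n := by omega
    have hlt : k₀ + m < n := by omega
    have ih' := ih (by omega) (fun i hi => hstep i (by omega))
    have hb : 0 ≤ binomProb n Q (k₀+m) :=
      binomProb_nonneg n hQ0 (le_of_lt hQ1) _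
    have hs := hstep m (by omega)
    have heq := binom_step n (k₀+m) hlt Q
    have hpos : (0:ℝ) < (((k₀+m:ℕ):ℝ)+1) * (1-Q) := by
      have : (0:ℝ) ≤ ((k₀+m:ℕ):ℝ) := Nat.cast_nonneg _
      nlinarith
    have key : binomProb n Q (k₀+m) * ρ ≤ binomProb n Q (k₀+m+1) := by
      rw [← mul_le_mul_iff_of_pos_right hpos]
      calc binomProb n Q (k₀+m) * ρ * ((((k₀+m:ℕ):ℝ)+1) * (1-Q))
          = binomProb n Q (k₀+m) * (ρ * (((k₀+m:ℕ):ℝ)+1) * (1-Q)) := by ring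
        _ ≤ binomProb n Q (k₀+m) * (((n:ℝ)-((k₀+m:ℕ):ℝ)) * Q) := by
            exact mul_le_mul_of_nonneg_left hs hb
        _ = binomProb n Q (k₀+m+1) * ((((k₀+m:ℕ):ℝ)+1) * (1-Q)) := by
            rw [heq]
    have hshift : k₀ + (m+1) = (k₀ + m) + 1 := by omega
    rw [hshift, pow_succ, ← mul_assoc]
    calc binomProb n Q k₀ * ρ^m * ρ ≤ binomProb n Q (k₀+m) * ρ := by
          exact mul_le_mul_of_nonneg_right ih' hρ
      _ ≤ binomProb n Q (k₀+m+1) := key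

lemma binom_sq_sum_le (n : ℕ) {p : ℝ} (hp0 : 0 ≤ p) (hp1 : p ≤ 1) {t : ℝ} (ht : 0 < t)
    (cond : ℕ → Prop) [DecidablePred cond] (hcond : ∀ k, cond k → t ≤ |(k:ℝ) - n*p|) :
    ∑ k ∈ range (n+1), (if cond k then binomProb n p k else 0) ≤ n*p*(1-p)/t^2 := by
  have step : ∀ k ∈ range (n+1), (if cond k then binomProb n p k else 0)
      ≤ ((k:ℝ) - n*p)^2 * binomProb n p k / t^2 := by
    intro k _
    have hb := binomProb_nonneg n hp0 hp1 k
    split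
    · rename_i h
      have habs := hcond k h
      have hsq : t^2 ≤ ((k:ℝ) - n*p)^2 := by
        have := sq_abs ((k:ℝ) - n*p)
        nlinarith [abs_nonneg ((k:ℝ) - n*p)]
      rw [le_div_iff₀ (by positivity)]
      nlinarith
    · positivity
  calc ∑ k ∈ range (n+1), (if cond k then binomProb n p k else 0)
      ≤ ∑ k ∈ range (n+1), ((k:ℝ) - n*p)^2 * binomProb n p k / t^2 :=
        Finset.sum_le_sum step
    _ = (∑ k ∈ range (n+1), ((k:ℝ) - n*p)^2 * binomProb n p k) / t^2 := by
        rw [Finset.sum_div]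
    _ = n*p*(1-p)/t^2 := by rw [binom_var]

lemma binom_split (n : ℕ) (p : ℝ) (cond : ℕ → Prop) [DecidablePred cond] :
    ∑ k ∈ range (n+1), (if cond k then binomProb n p k else 0)
      = 1 - ∑ k ∈ range (n+1), (if cond k then 0 else binomProb n p k) := by
  have : ∀ k ∈ range (n+1), (if cond k then binomProb n p k else 0)
      = binomProb n p k - (if cond k then 0 else binomProb n p k) := by
    intro k _; split <;> ring
  rw [Finset.sum_congr rfl this, Finset.sum_sub_distrib, binom_sum]

lemma prGE_ge_product (n : ℕ) (P Q c : ℝ) (hP0 : 0 ≤ P) (hP1 : P ≤ 1)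
    (hQ0 : 0 ≤ Q) (hQ1 : Q ≤ 1) :
    (∑ j ∈ range (n+1), if (j:ℝ) ≤ c then binomProb n P j else 0) *
    (∑ k ∈ range (n+1), if c ≤ (k:ℝ) then binomProb n Q k else 0) ≤ prGE n P n Q := by
  unfold prGE prGEshift
  rw [Finset.sum_mul_sum]
  apply Finset.sum_le_sum; intro j _
  apply Finset.sum_le_sum; intro k _
  have hbP := binomProb_nonneg n hP0 hP1 j
  have hbQ := binomProb_nonneg n hQ0 hQ1 k
  by_cases h1 : (j:ℝ) ≤ c
  · by_cases h2 : c ≤ (k:ℝ)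
    · have : (j:ℝ) - 0 ≤ (k:ℝ) := by linarith
      simp only [if_pos h1, if_pos h2, if_pos this]
      exact le_refl _
    · simp only [if_pos h1, if_neg h2, mul_zero]
      split
      · positivity
      · exact le_refl 0
  · simp only [if_neg h1, zero_mul]
    split
    · positivity
    · exact le_refl 0

lemma exists_big_atom {n : ℕ} {Q : ℝ} (hQ0 : 0 < Q) (hQ1 : Q ≤ 1)
    (hs1 : 1 ≤ Real.sqrt (n*Q)) :
    ∃ k₀ : ℕ, k₀ ≤ n ∧ |(k₀:ℝ) - n*Q| ≤ 2*Real.sqrt (n*Q) ∧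
      3/(20*Real.sqrt (n*Q)) ≤ binomProb n Q k₀ := by
  set s := Real.sqrt (n*Q) with hsdef
  have hnQ0 : (0:ℝ) ≤ (n:ℝ)*Q := by positivity
  have hs0 : 0 < s := by linarith
  have hs2 : s^2 = (n:ℝ)*Q := Real.sq_sqrt hnQ0
  have hnQpos : (0:ℝ) < (n:ℝ)*Q := by nlinarith
  -- tail bound
  have htail : ∑ k ∈ range (n+1),
      (if ¬ (|(k:ℝ) - n*Q| ≤ 2*s) then binomProb n Q k else 0) ≤ 1/4 := by
    have hb := binom_sq_sum_le n (le_of_lt hQ0) hQ1 (t := 2*s) (by linarith)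
      (fun k => ¬ (|(k:ℝ) - n*Q| ≤ 2*s))
      (fun k hk => le_of_lt (not_le.mp hk))
    have : (n:ℝ)*Q*(1-Q)/(2*s)^2 ≤ 1/4 := by
      rw [div_le_iff₀ (by positivity)]
      nlinarith
    linarith
  have hwin : 3/4 ≤ ∑ k ∈ range (n+1),
      (if |(k:ℝ) - n*Q| ≤ 2*s then binomProb n Q k else 0) := by
    have hsplit := binom_split n Q (fun k => |(k:ℝ) - n*Q| ≤ 2*s)
    have hrw : ∑ k ∈ range (n+1),
        (if |(k:ℝ) - n*Q| ≤ 2*s then (0:ℝ) else binomProb n Q k)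
        = ∑ k ∈ range (n+1),
        (if ¬ (|(k:ℝ) - n*Q| ≤ 2*s) then binomProb n Q k else 0) := by
      apply sum_congr rfl; intro k _
      by_cases h : |(k:ℝ) - n*Q| ≤ 2*s <;> simp [h]
    rw [hsplit, hrw]
    linarith
  set W := (range (n+1)).filter (fun k : ℕ => |(k:ℝ) - n*Q| ≤ 2*s) with hW
  have hWsum : 3/4 ≤ ∑ k ∈ W, binomProb n Q k := by
    rw [hW, Finset.sum_filter]
    exact hwin
  have hWne : W.Nonempty := by
    rcases Finset.eq_empty_or_nonempty W with h | h
    · rw [h] at hWsum; simp at hWsum; linarith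
    · exact h
  -- cardinality bound
  set A := ⌈(n:ℝ)*Q - 2*s⌉₊ with hA
  set Bb := ⌊(n:ℝ)*Q + 2*s⌋₊ with hB
  have hsub : W ⊆ Finset.Icc A Bb := by
    intro k hk
    rw [hW, Finset.mem_filter] at hk
    obtain ⟨_, habs⟩ := hk
    rw [abs_le] at habs
    rw [Finset.mem_Icc]
    constructor
    · rw [hA]; exact Nat.ceil_le.mpr (by linarith [habs.1])
    · rw [hB]; exact Nat.le_floor (by linarith [habs.2])
  have hcard : W.card ≤ Bb + 1 - A := by
    calc W.card ≤ (Finset.Icc A Bb).card := Finset.card_le_card hsub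
      _ = Bb + 1 - A := Nat.card_Icc A Bb
  have hAB : A ≤ Bb := by
    obtain ⟨w, hw⟩ := hWne
    have := hsub hw
    rw [Finset.mem_Icc] at this
    omega
  have hcardR : (W.card : ℝ) ≤ 4*s + 1 := by
    have h1 : W.card + A ≤ Bb + 1 := by omega
    have h2 : (W.card : ℝ) + A ≤ (Bb:ℝ) + 1 := by exact_mod_cast h1
    have h3 : (Bb:ℝ) ≤ (n:ℝ)*Q + 2*s := Nat.floor_le (by positivity)
    have h4 : (n:ℝ)*Q - 2*s ≤ A := Nat.le_ceil _
    linarith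
  -- pigeonhole
  have hex : ∃ k₀ ∈ W, 3/(20*s) ≤ binomProb n Q k₀ := by
    by_contra hcon
    push_neg at hcon
    have hlt : ∑ k ∈ W, binomProb n Q k < ∑ _k ∈ W, 3/(20*s) :=
      Finset.sum_lt_sum_of_nonempty hWne hcon
    rw [Finset.sum_const] at hlt
    have hval : (W.card : ℝ) * (3/(20*s)) ≤ (4*s+1) * (3/(20*s)) := by
      apply mul_le_mul_of_nonneg_right hcardR (by positivity)
    have hval2 : (4*s+1) * (3/(20*s)) ≤ 3/4 := by
      rw [div_le_iff₀ (by norm_num : (0:ℝ) < 4)] at *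
      have h5 : 4*s+1 ≤ 5*s := by linarith
      have : (4*s+1) * (3/(20*s)) ≤ 5*s * (3/(20*s)) := by
        apply mul_le_mul_of_nonneg_right h5 (by positivity)
      have heq : 5*s * (3/(20*s)) = 3/4 := by
        field_simp; ring
      linarith
    rw [nsmul_eq_mul] at hlt
    linarith
  obtain ⟨k₀, hk₀W, hk₀b⟩ := hex
  rw [hW, Finset.mem_filter, Finset.mem_range] at hk₀W
  exact ⟨k₀, by omega, hk₀W.2, hk₀b⟩

set_option maxHeartbeats 2000000 in
lemma binom_upper_tail {n : ℕ} {Q c a : ℝ}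
    (hQ0 : 0 < Q) (hQ23 : Q ≤ 2/3) (ha : 4 ≤ a) (hc0 : 0 ≤ c)
    (hcb : c ≤ n*Q + a * Real.sqrt (n*Q))
    (hs : 6*(a+3) ≤ Real.sqrt (n*Q)) :
    (3/20) * Real.exp (-(7*(a+4)*(a+5)))
      ≤ ∑ k ∈ range (n+1), if c ≤ (k:ℝ) then binomProb n Q k else 0 := by
  set s := Real.sqrt ((n:ℝ)*Q) with hsdef
  have hnQ0 : (0:ℝ) ≤ (n:ℝ)*Q := by positivity
  have hs2 : s^2 = (n:ℝ)*Q := Real.sq_sqrt hnQ0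
  have hs1 : (1:ℝ) ≤ s := by linarith
  have hs0 : (0:ℝ) < s := by linarith
  have hnQpos : (0:ℝ) < (n:ℝ)*Q := by nlinarith [hs1, hs0, hs2]
  have hn0 : (0:ℝ) < (n:ℝ) := by
    nlinarith [mul_le_mul_of_nonneg_left hQ23 (Nat.cast_nonneg n : (0:ℝ) ≤ (n:ℝ))]
  have hQ1 : Q < 1 := by linarith
  have h1Q3 : (1:ℝ)/3 ≤ 1 - Q := by linarith
  obtain ⟨k₀, hk₀n, hk₀abs, hk₀b⟩ := exists_big_atom hQ0 (by linarith) hs1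
  rw [← hsdef] at hk₀abs hk₀b
  obtain ⟨hk₀lo, hk₀hi⟩ := abs_le.mp hk₀abs
  set m₁ := max k₀ ⌈c⌉₊ with hm₁
  set F := ⌊s⌋₊ with hF
  have hk₀m₁ : k₀ ≤ m₁ := le_max_left _ _
  set J := m₁ + F - k₀ with hJdef
  have hJeq : k₀ + J = m₁ + F := by omega
  have hFR : (F:ℝ) ≤ s := Nat.floor_le (le_of_lt hs0)
  have hceil : (⌈c⌉₊ : ℝ) < c + 1 := Nat.ceil_lt_add_one hc0
  have hm₁R : (m₁:ℝ) ≤ (n:ℝ)*Q + a*s + 1 := by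
    rw [hm₁]
    push_cast [Nat.cast_max]
    apply max_le
    · nlinarith [mul_le_mul_of_nonneg_right (by linarith : (2:ℝ) ≤ a) (le_of_lt hs0)]
    · linarith
  set B := (a+3)*s with hBdef
  set T := (n:ℝ)*Q + B with hTdef
  have hB0 : (0:ℝ) ≤ B := by nlinarith
  have hB6 : B ≤ (n:ℝ)*Q/6 := by
    nlinarith [mul_le_mul_of_nonneg_right hs (le_of_lt hs0)]
  have hblockR : (m₁:ℝ) + F ≤ T := by
    rw [hTdef, hBdef]; nlinarith [hm₁R, hFR, hs1]
  have hTn : T ≤ (n:ℝ) := by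
    rw [hTdef]
    nlinarith [mul_le_mul_of_nonneg_left hQ23 (le_of_lt hn0), hB6]
  have hkJn : k₀ + J ≤ n := by
    have : ((k₀ + J : ℕ) : ℝ) ≤ (n:ℝ) := by
      rw [hJeq]; push_cast; linarith
    exact_mod_cast this
  set ρ := ((n:ℝ) - T)*Q/((T+1)*(1-Q)) with hρdef
  have hden : (0:ℝ) < (T+1)*(1-Q) := by
    apply mul_pos (by rw [hTdef]; nlinarith) (by linarith)
  have hρ0 : 0 ≤ ρ := by
    apply div_nonneg _ (le_of_lt hden)
    apply mul_nonneg (by linarith) (le_of_lt hQ0)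
  have hρ1 : ρ ≤ 1 := by
    rw [hρdef, div_le_one hden, hTdef]
    nlinarith [hB0, hnQ0, hQ0.le, hQ1.le]
  have hstep : ∀ i : ℕ, i < J →
      ρ * (((k₀+i : ℕ):ℝ)+1) * (1-Q) ≤ ((n:ℝ)-((k₀+i : ℕ):ℝ)) * Q := by
    intro i hi
    have hkT : ((k₀+i : ℕ):ℝ) + 1 ≤ T := by
      have h1 : k₀ + i + 1 ≤ m₁ + F := by omega
      have h2 : ((k₀ + i + 1 : ℕ) : ℝ) ≤ ((m₁ + F : ℕ) : ℝ) := by exact_mod_cast h1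
      push_cast at h2 ⊢
      linarith
    have cca : ρ * (((k₀+i : ℕ):ℝ)+1) * (1-Q) ≤ ρ * ((T+1) * (1-Q)) := by
      rw [mul_assoc]
      apply mul_le_mul_of_nonneg_left _ hρ0
      apply mul_le_mul_of_nonneg_right (by linarith) (by linarith)
    have ccb : ρ * ((T+1) * (1-Q)) = ((n:ℝ) - T)*Q := by
      rw [hρdef]
      field_simp
      exact mul_div_cancel_right₀ _ (ne_of_gt (by rw [hTdef]; linarith))
    have ccc : ((n:ℝ) - T)*Q ≤ ((n:ℝ)-((k₀+i : ℕ):ℝ)) * Q := by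
      apply mul_le_mul_of_nonneg_right _ (le_of_lt hQ0)
      linarith
    linarith
  set x := B/((n:ℝ)*(1-Q)) with hxdef
  set v := (B+1)/((n:ℝ)*Q) with hvdef
  have hn1Q : (0:ℝ) < (n:ℝ)*(1-Q) := by nlinarith
  have hx0 : 0 ≤ x := by positivity
  have hv0 : 0 ≤ v := by positivity
  have hx12 : x ≤ 1/2 := by
    rw [hxdef, div_le_iff₀ hn1Q]
    nlinarith
  have hρexp : Real.exp (-(2*x+v)) ≤ ρ := by
    have h1 : Real.exp (-(2*x)) ≤ 1 - x := exp_neg_le_one_sub hx0 hx12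
    have h2 : Real.exp (-v) ≤ 1/(1+v) := exp_neg_le_inv_one_add hv0
    have hprod : Real.exp (-(2*x+v)) = Real.exp (-(2*x)) * Real.exp (-v) := by
      rw [← Real.exp_add]; ring_nf
    have h3 : Real.exp (-(2*x)) * Real.exp (-v) ≤ (1-x) * (1/(1+v)) := by
      apply mul_le_mul h1 h2 (le_of_lt (Real.exp_pos _)) (by linarith)
    have heq : (1-x) * (1/(1+v)) = ρ := by
      rw [hxdef, hvdef, hρdef, hTdef]
      have hv1 : (0:ℝ) < 1 + (B+1)/((n:ℝ)*Q) := by positivity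
      field_simp
      ring
    rw [hprod]
    rw [heq] at h3
    exact h3
  have hJle : (J:ℝ) ≤ (a+5)*s := by
    have hcast : (J:ℝ) = ((m₁:ℝ) + F) - k₀ := by
      have : ((m₁ + F - k₀ : ℕ) : ℝ) = ((m₁ + F : ℕ):ℝ) - (k₀:ℝ) := by
        have hle : k₀ ≤ m₁ + F := by omega
        push_cast [Nat.cast_sub hle]
        ring
      rw [hJdef, this]; push_cast; ring
    rw [hcast]
    nlinarith
  have huJ : (2*x+v) * (J:ℝ) ≤ 7*(a+4)*(a+5) := by
    have hxs : x * s ≤ 3*(a+3) := by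
      have hd : s^2/3 ≤ (n:ℝ)*(1-Q) := by nlinarith
      have : x ≤ B/(s^2/3) := by
        apply div_le_div_of_nonneg_left hB0 (by positivity) hd
      have hsimp : B/(s^2/3) * s = 3*(a+3) := by
        rw [hBdef]; field_simp
      nlinarith
    have hvs : v * s ≤ a + 4 := by
      have : v = (B+1)/s^2 := by rw [hvdef, hs2]
      rw [this]
      have hsimp : (B+1)/s^2 * s = (B+1)/s := by field_simp
      rw [hsimp, div_le_iff₀ hs0]
      rw [hBdef]
      nlinarith
    have hu0 : 0 ≤ 2*x + v := by linarith
    have hJ0 : (0:ℝ) ≤ (J:ℝ) := Nat.cast_nonneg _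
    have husJ : (2*x+v) * (J:ℝ) ≤ (2*x+v) * ((a+5)*s) :=
      mul_le_mul_of_nonneg_left hJle hu0
    have : (2*x+v) * ((a+5)*s) = ((2*x+v)*s) * (a+5) := by ring
    nlinarith [mul_le_mul_of_nonneg_right (by linarith : (2*x+v)*s ≤ 7*(a+4)) (by linarith : (0:ℝ) ≤ a+5)]
  -- per-term lower bound on the block
  have hterm : ∀ k ∈ Finset.Icc m₁ (m₁+F),
      (3/(20*s)) * Real.exp (-(7*(a+4)*(a+5))) ≤ binomProb n Q k := by
    intro k hk
    rw [Finset.mem_Icc] at hk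
    obtain ⟨hk1, hk2⟩ := hk
    set i := k - k₀ with hidef
    have hki : k = k₀ + i := by omega
    have hiJ : i ≤ J := by omega
    have hchain := binom_chain (le_of_lt hQ0) hQ1 hρ0 k₀ i
      (by omega) (fun j hj => hstep j (by omega))
    have hpow : ρ^J ≤ ρ^i := pow_le_pow_of_le_one hρ0 hρ1 hiJ
    have hb0 : 0 ≤ binomProb n Q k₀ := binomProb_nonneg n (le_of_lt hQ0) (by linarith) _
    have hexpρ : Real.exp (-(7*(a+4)*(a+5))) ≤ ρ^J := by
      have h1 : Real.exp (-(2*x+v))^J ≤ ρ^J :=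
        pow_le_pow_left₀ (le_of_lt (Real.exp_pos _)) hρexp J
      have h2 : Real.exp (-(2*x+v))^J = Real.exp (-((2*x+v) * (J:ℝ))) := by
        rw [← Real.exp_nat_mul]; ring_nf
      have h3 : Real.exp (-(7*(a+4)*(a+5))) ≤ Real.exp (-((2*x+v) * (J:ℝ))) := by
        apply Real.exp_le_exp.mpr; linarith
      rw [h2] at h1; linarith
    calc (3/(20*s)) * Real.exp (-(7*(a+4)*(a+5)))
        ≤ binomProb n Q k₀ * ρ^J := by
          apply mul_le_mul hk₀b hexpρ (le_of_lt (Real.exp_pos _)) hb0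
      _ ≤ binomProb n Q k₀ * ρ^i := mul_le_mul_of_nonneg_left hpow hb0
      _ ≤ binomProb n Q (k₀+i) := binom_chain (le_of_lt hQ0) hQ1 hρ0 k₀ i
          (by omega) (fun j hj => hstep j (by omega))
      _ = binomProb n Q k := by rw [← hki]
  -- sum over the block
  have hcardIcc : (Finset.Icc m₁ (m₁+F)).card = F + 1 := by
    rw [Nat.card_Icc]; omega
  have hblocksum : (3/20) * Real.exp (-(7*(a+4)*(a+5)))
      ≤ ∑ k ∈ Finset.Icc m₁ (m₁+F), binomProb n Q k := by
    have h1 : ∑ _k ∈ Finset.Icc m₁ (m₁+F), (3/(20*s)) * Real.exp (-(7*(a+4)*(a+5)))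
        ≤ ∑ k ∈ Finset.Icc m₁ (m₁+F), binomProb n Q k := Finset.sum_le_sum hterm
    rw [Finset.sum_const, hcardIcc, nsmul_eq_mul] at h1
    have hF1 : s ≤ ((F+1 : ℕ):ℝ) := by
      push_cast
      have := Nat.lt_floor_add_one s
      linarith
    have h2 : (3/20) * Real.exp (-(7*(a+4)*(a+5)))
        ≤ ((F+1:ℕ):ℝ) * ((3/(20*s)) * Real.exp (-(7*(a+4)*(a+5)))) := by
      have hpos : (0:ℝ) < (3/(20*s)) * Real.exp (-(7*(a+4)*(a+5))) := by positivity
      have h3 : s * ((3/(20*s)) * Real.exp (-(7*(a+4)*(a+5))))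
          ≤ ((F+1:ℕ):ℝ) * ((3/(20*s)) * Real.exp (-(7*(a+4)*(a+5)))) :=
        mul_le_mul_of_nonneg_right hF1 (le_of_lt hpos)
      have h4 : s * ((3/(20*s)) * Real.exp (-(7*(a+4)*(a+5))))
          = (3/20) * Real.exp (-(7*(a+4)*(a+5))) := by
        field_simp
      linarith
    push_cast at h1 h2 ⊢
    linarith
  -- the block is inside the tail
  have hsubset : Finset.Icc m₁ (m₁+F) ⊆
      (range (n+1)).filter (fun k : ℕ => c ≤ (k:ℝ)) := by
    intro k hk
    rw [Finset.mem_Icc] at hk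
    rw [Finset.mem_filter, Finset.mem_range]
    constructor
    · omega
    · have hc1 : c ≤ (⌈c⌉₊ : ℝ) := Nat.le_ceil c
      have hc2 : (⌈c⌉₊:ℕ) ≤ m₁ := le_max_right _ _
      have : ((⌈c⌉₊:ℕ):ℝ) ≤ (k:ℝ) := by exact_mod_cast le_trans hc2 hk.1
      linarith
  have hfinal : ∑ k ∈ Finset.Icc m₁ (m₁+F), binomProb n Q k
      ≤ ∑ k ∈ range (n+1), if c ≤ (k:ℝ) then binomProb n Q k else 0 := by
    rw [← Finset.sum_filter]
    apply Finset.sum_le_sum_of_subset_of_nonneg hsubset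
    intro k _ _
    exact binomProb_nonneg n (le_of_lt hQ0) (by linarith) k
  linarith



set_option maxHeartbeats 2000000 in
lemma prGE_lower {K : ℝ} (hK : 1 ≤ K) :
    ∃ δ : ℝ, 0 < δ ∧ ∀ (n : ℕ) (P Q : ℝ), 0 ≤ Q → Q ≤ P → P ≤ 2/3 → 0 < P + Q →
      (n:ℝ)*(P-Q)^2 ≤ K*(P+Q) → δ ≤ prGE n P n Q := by
  set a : ℝ := Real.sqrt (3*K) + 4 with hadef
  have ha4 : 4 ≤ a := by
    have := Real.sqrt_nonneg (3*K); linarith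
  set M : ℝ := 108*(a+3)^2 + 9*K with hMdef
  have hM0 : 0 < M := by nlinarith
  refine ⟨min (Real.exp (-(3*M))) ((3/4) * ((3/20) * Real.exp (-(7*(a+4)*(a+5))))),
    lt_min (Real.exp_pos _) (by positivity), ?_⟩
  intro n P Q hQ0 hQP hP23 hS hcon
  have hP0 : 0 ≤ P := le_trans hQ0 hQP
  have hP1 : P ≤ 1 := by linarith
  have hQ23 : Q ≤ 2/3 := le_trans hQP hP23
  have hQ1 : Q ≤ 1 := by linarith
  by_cases hcase : (n:ℝ)*(P+Q) ≤ M
  · -- small case: use Pr(X = 0)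
    have hL : ∑ j ∈ range (n+1), (if (j:ℝ) ≤ 0 then binomProb n P j else 0)
        = (1-P)^n := by
      rw [Finset.sum_eq_single_of_mem 0 (Finset.mem_range.mpr (by omega))]
      · rw [if_pos (by norm_num), binomProb_zero]
      · intro j _ hj
        rw [if_neg]
        push_neg
        exact_mod_cast Nat.pos_of_ne_zero hj
    have hR : ∑ k ∈ range (n+1), (if (0:ℝ) ≤ (k:ℝ) then binomProb n Q k else 0) = 1 := by
      have : ∀ k ∈ range (n+1), (if (0:ℝ) ≤ (k:ℝ) then binomProb n Q k else 0)
          = binomProb n Q k := by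
        intro k _; rw [if_pos (Nat.cast_nonneg k)]
      rw [Finset.sum_congr rfl this, binom_sum]
    have hprod := prGE_ge_product n P Q 0 hP0 hP1 hQ0 hQ1
    rw [hL, hR, mul_one] at hprod
    have hexp : Real.exp (-(3*M)) ≤ (1-P)^n := by
      have h1 : Real.exp (-(3*P))^n ≤ (1-P)^n :=
        pow_le_pow_left₀ (le_of_lt (Real.exp_pos _)) (exp_neg_three_le hP0 hP23) n
      have h2 : Real.exp (-(3*P))^n = Real.exp ((n:ℝ) * (-(3*P))) := by
        rw [Real.exp_nat_mul]
      have h3 : Real.exp (-(3*M)) ≤ Real.exp ((n:ℝ) * (-(3*P))) := by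
        apply Real.exp_le_exp.mpr
        have hnP : (n:ℝ)*P ≤ M := by nlinarith [(Nat.cast_nonneg n : (0:ℝ) ≤ (n:ℝ))]
        nlinarith
      rw [h2] at h1
      linarith
    calc min (Real.exp (-(3*M))) ((3/4) * ((3/20) * Real.exp (-(7*(a+4)*(a+5)))))
        ≤ Real.exp (-(3*M)) := min_le_left _ _
      _ ≤ (1-P)^n := hexp
      _ ≤ prGE n P n Q := hprod
  · push_neg at hcase
    have hn0 : (0:ℝ) < n := by nlinarith
    -- Q is comparable to P+Q
    have hQ3 : (P+Q)/3 ≤ Q := by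
      by_contra hq
      push_neg at hq
      have h1 : (P+Q)/3 ≤ P - Q := by linarith
      have h2 : ((P+Q)/3)^2 ≤ (P-Q)^2 := pow_le_pow_left₀ (by linarith) h1 2
      have h3 : (n:ℝ)*((P+Q)/3)^2 ≤ (n:ℝ)*(P-Q)^2 :=
        mul_le_mul_of_nonneg_left h2 (le_of_lt hn0)
      nlinarith [mul_lt_mul_of_pos_right hcase hS, sq_nonneg (a+3)]
    have hQpos : 0 < Q := by nlinarith
    have hnQM : M/3 < (n:ℝ)*Q := by
      have := mul_le_mul_of_nonneg_left hQ3 (le_of_lt hn0)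
      nlinarith
    set s := Real.sqrt ((n:ℝ)*Q) with hsdef
    have hnQ0 : (0:ℝ) ≤ (n:ℝ)*Q := by positivity
    have hs2 : s^2 = (n:ℝ)*Q := Real.sq_sqrt hnQ0
    have hsbig : 6*(a+3) ≤ s := by
      have hsq : (6*(a+3))^2 ≤ (n:ℝ)*Q := by nlinarith
      calc 6*(a+3) = Real.sqrt ((6*(a+3))^2) := by
            rw [Real.sqrt_sq (by linarith)]
        _ ≤ s := Real.sqrt_le_sqrt hsq
    set t := 2*Real.sqrt ((n:ℝ)*(P+Q)) with htdef
    have hnS0 : (0:ℝ) ≤ (n:ℝ)*(P+Q) := by positivity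
    have ht2 : (Real.sqrt ((n:ℝ)*(P+Q)))^2 = (n:ℝ)*(P+Q) := Real.sq_sqrt hnS0
    have ht0 : 0 < t := by
      rw [htdef]
      have : 0 < Real.sqrt ((n:ℝ)*(P+Q)) := Real.sqrt_pos.mpr (by nlinarith)
      linarith
    set c := (n:ℝ)*P + t with hcdef
    -- X part
    have hXtail : ∑ j ∈ range (n+1), (if ¬ ((j:ℝ) ≤ c) then binomProb n P j else 0)
        ≤ 1/4 := by
      have hb := binom_sq_sum_le n hP0 hP1 (t := t) ht0
        (fun j => ¬ ((j:ℝ) ≤ c))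
        (fun j hj => by
          push_neg at hj
          have : (n:ℝ)*P + t < (j:ℝ) := by rw [hcdef] at hj; linarith
          have h2 : t ≤ (j:ℝ) - (n:ℝ)*P := by linarith
          calc t ≤ (j:ℝ) - (n:ℝ)*P := h2
            _ ≤ |(j:ℝ) - (n:ℝ)*P| := le_abs_self _)
      have hbound : (n:ℝ)*P*(1-P)/t^2 ≤ 1/4 := by
        have htsq : t^2 = 4*((n:ℝ)*(P+Q)) := by rw [htdef]; nlinarith [ht2]
        rw [htsq, div_le_iff₀ (by nlinarith)]
        nlinarith [mul_nonneg (mul_nonneg (le_of_lt hn0) hP0) hP0,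
          mul_nonneg (le_of_lt hn0) hQ0]
      linarith
    have hX : 3/4 ≤ ∑ j ∈ range (n+1), (if (j:ℝ) ≤ c then binomProb n P j else 0) := by
      have hsplit := binom_split n P (fun j : ℕ => (j:ℝ) ≤ c)
      have hrw : ∑ j ∈ range (n+1), (if (j:ℝ) ≤ c then (0:ℝ) else binomProb n P j)
          = ∑ j ∈ range (n+1), (if ¬ ((j:ℝ) ≤ c) then binomProb n P j else 0) := by
        apply Finset.sum_congr rfl; intro j _
        by_cases h : (j:ℝ) ≤ c <;> simp [h]
      rw [hsplit, hrw]
      linarith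
    -- Y part
    have hcb : c ≤ (n:ℝ)*Q + a * s := by
      have hdelta : (n:ℝ)*(P-Q) ≤ Real.sqrt (3*K) * s := by
        have hnd0 : 0 ≤ (n:ℝ)*(P-Q) := by nlinarith
        have hrhs0 : 0 ≤ Real.sqrt (3*K) * s := by positivity
        apply le_of_pow_le_pow_left₀ (by norm_num : 2 ≠ 0) hrhs0
        have hsqK : (Real.sqrt (3*K))^2 = 3*K := Real.sq_sqrt (by linarith)
        have hexp : ((n:ℝ)*(P-Q))^2 = (n:ℝ) * ((n:ℝ)*(P-Q)^2) := by ring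
        have h1 : ((n:ℝ)*(P-Q))^2 ≤ (n:ℝ) * (K*(P+Q)) := by
          rw [hexp]
          exact mul_le_mul_of_nonneg_left hcon (le_of_lt hn0)
        have h2 : (n:ℝ) * (K*(P+Q)) ≤ 3*K*((n:ℝ)*Q) := by nlinarith
        calc ((n:ℝ)*(P-Q))^2 ≤ 3*K*((n:ℝ)*Q) := le_trans h1 h2
          _ = (Real.sqrt (3*K) * s)^2 := by rw [mul_pow, hsqK, hs2]
      have hts : t ≤ 4*s := by
        apply le_of_pow_le_pow_left₀ (by norm_num : 2 ≠ 0) (by positivity)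
        have : t^2 = 4*((n:ℝ)*(P+Q)) := by rw [htdef]; nlinarith [ht2]
        rw [this]
        have h16 : (4*s)^2 = 16*((n:ℝ)*Q) := by rw [mul_pow, hs2]; ring
        rw [h16]
        nlinarith
      rw [hcdef, hadef]
      nlinarith
    have hY := binom_upper_tail hQpos hQ23 ha4 (by rw [hcdef]; positivity) hcb hsbig
    have hprod := prGE_ge_product n P Q c hP0 hP1 hQ0 hQ1
    have hYnn : (0:ℝ) ≤ (3/20) * Real.exp (-(7*(a+4)*(a+5))) := by positivity
    have hXnn : (0:ℝ) ≤ ∑ j ∈ range (n+1), (if (j:ℝ) ≤ c then binomProb n P j else 0) := by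
      apply Finset.sum_nonneg; intro j _
      split
      · exact binomProb_nonneg n hP0 hP1 j
      · exact le_refl 0
    calc min (Real.exp (-(3*M))) ((3/4) * ((3/20) * Real.exp (-(7*(a+4)*(a+5)))))
        ≤ (3/4) * ((3/20) * Real.exp (-(7*(a+4)*(a+5)))) := min_le_right _ _
      _ ≤ (∑ j ∈ range (n+1), (if (j:ℝ) ≤ c then binomProb n P j else 0)) *
          (∑ k ∈ range (n+1), (if c ≤ (k:ℝ) then binomProb n Q k else 0)) := by
          apply mul_le_mul hX hY hYnn hXnn
      _ ≤ prGE n P n Q := hprod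




theorem weak_consistency_characterization
    (p q : ℕ → ℝ)
    (hp : ∀ n, 0 ≤ p n ∧ p n ≤ 2 / 3) (hq : ∀ n, 0 ≤ q n ∧ q n ≤ 2 / 3)
    (hpos : ∀ n, 0 < p n + q n) :
    Tendsto (fun n : ℕ => Pn n (p n) (q n)) atTop (nhds 0) ↔
    Tendsto (fun n : ℕ => (n : ℝ) * (p n - q n) ^ 2 / (p n + q n)) atTop atTop := by
  have hPQ : ∀ n, max (p n) (q n) + min (p n) (q n) = p n + q n :=
    fun n => max_add_min _ _
  have hsq : ∀ n, (max (p n) (q n) - min (p n) (q n))^2 = (p n - q n)^2 := by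
    intro n
    rw [max_sub_min_eq_abs, sq_abs]
    ring
  have hQ0 : ∀ n, 0 ≤ min (p n) (q n) := fun n => le_min (hp n).1 (hq n).1
  have hP23 : ∀ n, max (p n) (q n) ≤ 2/3 := fun n => max_le (hp n).2 (hq n).2
  have hP1 : ∀ n, max (p n) (q n) ≤ 1 := fun n => le_trans (hP23 n) (by norm_num)
  have hQ1 : ∀ n, min (p n) (q n) ≤ 1 :=
    fun n => le_trans (min_le_max) (hP1 n)
  have hP0 : ∀ n, 0 ≤ max (p n) (q n) := fun n => le_trans (hQ0 n) min_le_max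
  constructor
  · -- P → 0  ⇒  statistic → ∞
    intro hT
    by_contra hnot
    rw [tendsto_atTop] at hnot
    push_neg at hnot
    obtain ⟨b, hb⟩ := hnot
    have hb' : ∃ᶠ n : ℕ in atTop, (n:ℝ) * (p n - q n)^2 / (p n + q n) < b := by
      apply hb.mono
      intro n hn
      exact hn
    set K := max b 1 with hKdef
    obtain ⟨δ, hδ0, hδ⟩ := prGE_lower (K := K) (le_max_right _ _)
    have hfreq : ∃ᶠ n in atTop, δ ≤ Pn n (p n) (q n) := by
      apply hb'.mono
      intro n hn
      have hcon : (n:ℝ) * (p n - q n)^2 ≤ K * (p n + q n) := by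
        have h1 : (n:ℝ) * (p n - q n)^2 / (p n + q n) < K :=
          lt_of_lt_of_le hn (le_max_left _ _)
        have := (div_lt_iff₀ (hpos n)).mp h1
        linarith
      have happ := hδ n (max (p n) (q n)) (min (p n) (q n))
        (hQ0 n) min_le_max (hP23 n) (by rw [hPQ]; exact hpos n)
        (by rw [hsq, hPQ]; exact hcon)
      exact happ
    have hev : ∀ᶠ n in atTop, Pn n (p n) (q n) < δ := hT.eventually_lt_const hδ0
    obtain ⟨n, hn1, hn2⟩ := (hfreq.and_eventually hev).exists
    linarith
  · -- statistic → ∞  ⇒  P → 0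
    intro hT
    have hev : ∀ᶠ n : ℕ in atTop, (1:ℝ) ≤ (n:ℝ) * (p n - q n)^2 / (p n + q n) :=
      hT.eventually_ge_atTop 1
    have hub : ∀ᶠ n : ℕ in atTop, Pn n (p n) (q n)
        ≤ ((n:ℝ) * (p n - q n)^2 / (p n + q n))⁻¹ := by
      apply hev.mono
      intro n hn
      have hne : min (p n) (q n) < max (p n) (q n) := by
        rcases lt_or_ge (min (p n) (q n)) (max (p n) (q n)) with h | h
        · exact h
        · exfalso
          have heq : min (p n) (q n) = max (p n) (q n) := le_antisymm min_le_max h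
          have : p n = q n := by
            rcases le_total (p n) (q n) with hle | hle
            · rw [min_eq_left hle, max_eq_right hle] at heq; exact heq
            · rw [min_eq_right hle, max_eq_left hle] at heq; exact heq.symm
          rw [this] at hn
          simp at hn
          linarith [hpos n]
      have hn0 : 0 < n := by
        by_contra h0
        push_neg at h0
        interval_cases n
        simp at hn
        linarith [hpos 0]
      have hcheb := prGE_le_cheb (hP0 n) (hP1 n) (hQ0 n) (hQ1 n) hne hn0
      have heq : (max (p n) (q n) + min (p n) (q n)) /
          ((n:ℝ) * (max (p n) (q n) - min (p n) (q n))^2)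
          = ((n:ℝ) * (p n - q n)^2 / (p n + q n))⁻¹ := by
        rw [hsq, hPQ]
        rw [inv_div]
      calc Pn n (p n) (q n) ≤ _ := hcheb
        _ = _ := heq
    have hlo : ∀ᶠ n : ℕ in atTop, 0 ≤ Pn n (p n) (q n) := by
      apply Eventually.of_forall
      intro n
      exact prGE_nonneg (hP0 n) (hP1 n) (hQ0 n) (hQ1 n)
    have hinv : Tendsto (fun n : ℕ => ((n:ℝ) * (p n - q n)^2 / (p n + q n))⁻¹)
        atTop (nhds 0) := hT.inv_tendsto_atTop
    exact squeeze_zero' hlo hub hinv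
end

section
/- Let p_n, q_n be sequences in [0,1] with n · P(n, p_n, q_n) → 0 as n → ∞. Then for every real α > 0, P(⌊α n⌋, p_n, q_n) → 0 as n → ∞. -/
open Real Filter

section Walk
variable (p q : ℝ)

noncomputable def delta : ℤ → ℝ := fun ℓ => if ℓ = 0 then 1 else 0

noncomputable def stepP (p : ℝ) (g : ℤ → ℝ) : ℤ → ℝ := fun ℓ => (1-p) * g ℓ + p * g (ℓ+1)
noncomputable def stepQ (q : ℝ) (g : ℤ → ℝ) : ℤ → ℝ := fun ℓ => (1-q) * g ℓ + q * g (ℓ-1)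

noncomputable def walk : ℕ → ℤ → ℝ
  | 0 => delta
  | n+1 => stepP p (stepQ q (walk n))

lemma walk_succ (n : ℕ) (ℓ : ℤ) :
    walk p q (n+1) ℓ = p*(1-q) * walk p q n (ℓ+1)
      + ((1-p)*(1-q) + p*q) * walk p q n ℓ + q*(1-p) * walk p q n (ℓ-1) := by
  show stepP p (stepQ q (walk p q n)) ℓ = _
  simp only [stepP, stepQ, add_sub_cancel_right]
  ring

variable {p q : ℝ} (hp0 : 0 ≤ p) (hp1 : p ≤ 1) (hq0 : 0 ≤ q) (hq1 : q ≤ 1)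

include hp0 hp1 hq0 hq1 in
lemma walk_nonneg (n : ℕ) (ℓ : ℤ) : 0 ≤ walk p q n ℓ := by
  induction n generalizing ℓ with
  | zero => simp only [walk, delta]; positivity
  | succ n ih =>
    rw [walk_succ]
    have h1 := ih (ℓ+1); have h2 := ih ℓ; have h3 := ih (ℓ-1)
    nlinarith [mul_nonneg (mul_nonneg hp0 (by linarith : (0:ℝ) ≤ 1-q)) h1,
      mul_nonneg (mul_nonneg hq0 (by linarith : (0:ℝ) ≤ 1-p)) h3,
      mul_nonneg (add_nonneg (mul_nonneg (by linarith : (0:ℝ) ≤ 1-p) (by linarith : (0:ℝ) ≤ 1-q)) (mul_nonneg hp0 hq0)) h2]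

lemma walk_support_pos (n : ℕ) (ℓ : ℤ) (h : (n:ℤ) < ℓ) : walk p q n ℓ = 0 := by
  induction n generalizing ℓ with
  | zero => exact if_neg (by omega)
  | succ n ih =>
    rw [walk_succ, ih (ℓ+1) (by push_cast at h ⊢; omega), ih ℓ (by push_cast at h ⊢; omega),
      ih (ℓ-1) (by push_cast at h ⊢; omega)]
    ring

lemma walk_support_neg (n : ℕ) (ℓ : ℤ) (h : ℓ < -(n:ℤ)) : walk p q n ℓ = 0 := by
  induction n generalizing ℓ with
  | zero => exact if_neg (by omega)
  | succ n ih =>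
    rw [walk_succ, ih (ℓ+1) (by push_cast at h ⊢; omega), ih ℓ (by push_cast at h ⊢; omega),
      ih (ℓ-1) (by push_cast at h ⊢; omega)]
    ring

end Walk
def IsSLC (g : ℤ → ℝ) : Prop := ∀ x y : ℤ, x ≤ y → g (x-1) * g (y+1) ≤ g x * g y

lemma isSLC_delta : IsSLC delta := by
  intro x y hxy
  rcases eq_or_ne x 1 with rfl | hx
  · have : ¬ (y + 1 = 0) := by omega
    simp [delta, this]
  · simp only [delta, if_neg (by omega : ¬ (x - 1 = 0))]
    rw [zero_mul]
    rcases eq_or_ne x 0 with rfl | h0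
    · rcases eq_or_ne y 0 with rfl | hy0
      · simp
      · simp [hy0]
    · simp [h0]

lemma isSLC_shift (g : ℤ → ℝ) (c : ℤ) (h : IsSLC g) : IsSLC (fun z => g (z + c)) := by
  intro x y hxy
  have := h (x + c) (y + c) (by omega)
  have e1 : x - 1 + c = x + c - 1 := by ring
  have e2 : y + 1 + c = y + c + 1 := by ring
  simpa [e1, e2] using this

lemma isSLC_conv (g : ℤ → ℝ) (hg : ∀ z, 0 ≤ g z) (h : IsSLC g) (u v : ℝ)
    (hu : 0 ≤ u) (hv : 0 ≤ v) : IsSLC (fun z => u * g z + v * g (z+1)) := by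
  intro x y hxy
  simp only
  have h1 : g (x-1) * g (y+1) ≤ g x * g y := h x y hxy
  have h2 : g x * g (y+2) ≤ g (x+1) * g (y+1) := by
    have := h (x+1) (y+1) (by omega)
    have e1 : x + 1 - 1 = x := by ring
    have e2 : y + 1 + 1 = y + 2 := by ring
    rwa [e1, e2] at this
  have h3 : g (x-1) * g (y+2) ≤ g (x+1) * g y := by
    rcases eq_or_lt_of_le hxy with rfl | hlt
    · have := h x (x+1) (by omega)
      have e2 : x + 1 + 1 = x + 2 := by ring
      rw [e2] at this
      calc g (x-1) * g (x+2) ≤ g x * g (x+1) := this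
        _ = g (x+1) * g x := by ring
    · have hA := h x (y+1) (by omega)
      have hB := h (x+1) y (by omega)
      have e1 : x + 1 - 1 = x := by ring
      have e2 : y + 1 + 1 = y + 2 := by ring
      rw [e2] at hA; rw [e1] at hB
      calc g (x-1) * g (y+2) ≤ g x * g (y+1) := hA
        _ ≤ g (x+1) * g y := hB
  have e3 : x - 1 + 1 = x := by ring
  have e4 : y + 1 + 1 = y + 2 := by ring
  rw [e3, e4]
  nlinarith [mul_le_mul_of_nonneg_left h1 (mul_nonneg hu hu),
    mul_le_mul_of_nonneg_left h2 (mul_nonneg hv hv),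
    mul_le_mul_of_nonneg_left h3 (mul_nonneg hu hv)]

lemma isSLC_stepP {p : ℝ} (hp0 : 0 ≤ p) (hp1 : p ≤ 1) (g : ℤ → ℝ) (hg : ∀ z, 0 ≤ g z)
    (h : IsSLC g) : IsSLC (stepP p g) := by
  have := isSLC_conv g hg h (1-p) p (by linarith) hp0
  exact this

lemma isSLC_stepQ {q : ℝ} (hq0 : 0 ≤ q) (hq1 : q ≤ 1) (g : ℤ → ℝ) (hg : ∀ z, 0 ≤ g z)
    (h : IsSLC g) : IsSLC (stepQ q g) := by
  have hsh : IsSLC (fun z => g (z + (-1))) := isSLC_shift g (-1) h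
  have key := isSLC_conv (fun z => g (z + (-1))) (fun z => hg _) hsh q (1-q) hq0 (by linarith)
  have : stepQ q g = fun z => q * (fun w => g (w + (-1))) z + (1-q) * (fun w => g (w + (-1))) (z+1) := by
    funext z
    simp only [stepQ]
    have e1 : z + -1 = z - 1 := by ring
    have e2 : z + 1 + -1 = z := by ring
    rw [e1, e2]
    ring
  rw [this]
  exact key

lemma walk_isSLC {p q : ℝ} (hp0 : 0 ≤ p) (hp1 : p ≤ 1) (hq0 : 0 ≤ q) (hq1 : q ≤ 1)
    (n : ℕ) : IsSLC (walk p q n) := by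
  induction n with
  | zero => exact isSLC_delta
  | succ n ih =>
    show IsSLC (stepP p (stepQ q (walk p q n)))
    have hg : ∀ z, 0 ≤ walk p q n z := walk_nonneg hp0 hp1 hq0 hq1 n
    have hsq : ∀ z, 0 ≤ stepQ q (walk p q n) z := by
      intro z
      simp only [stepQ]
      have := hg z; have := hg (z-1)
      nlinarith
    exact isSLC_stepP hp0 hp1 _ hsq (isSLC_stepQ hq0 hq1 _ hg ih)
lemma walk_symm {p q : ℝ} (n : ℕ) :
    ∀ ℓ : ℕ, (q*(1-p))^ℓ * walk p q n (-(ℓ:ℤ)) = (p*(1-q))^ℓ * walk p q n (ℓ:ℤ) := by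
  induction n with
  | zero =>
    intro ℓ
    rcases Nat.eq_zero_or_pos ℓ with rfl | hl
    · simp
    · have h1 : walk p q 0 (-(ℓ:ℤ)) = 0 := by
        show delta _ = 0; rw [delta, if_neg (by omega)]
      have h2 : walk p q 0 (ℓ:ℤ) = 0 := by
        show delta _ = 0; rw [delta, if_neg (by omega)]
      rw [h1, h2, mul_zero, mul_zero]
  | succ n ih =>
    intro ℓ
    match ℓ with
    | 0 => simp
    | (m+1) =>
      rw [walk_succ, walk_succ]
      have e1 : (-(↑(m+1):ℤ)) + 1 = -(m:ℤ) := by push_cast; ring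
      have e2 : (-(↑(m+1):ℤ)) - 1 = -((m+2 : ℕ):ℤ) := by push_cast; ring
      have e3 : ((↑(m+1):ℤ)) + 1 = ((m+2:ℕ):ℤ) := by push_cast; ring
      have e4 : ((↑(m+1):ℤ)) - 1 = (m:ℤ) := by push_cast; ring
      rw [e1, e2, e3, e4]
      have i1 := ih m
      have i2 := ih (m+1)
      have i3 := ih (m+2)
      linear_combination (p*(1-q))*(q*(1-p))*i1 + ((1-p)*(1-q)+p*q)*i2 + i3
lemma key_ineq {p q : ℝ} (hp0 : 0 ≤ p) (hp1 : p ≤ 1) (hq0 : 0 ≤ q) (hq1 : q ≤ 1)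
    (hqp : q ≤ p) (n : ℕ) :
    q*(1-p) * walk p q n (-1) ≤ p*(1-q) * walk p q n 0 := by
  have hsym := walk_symm (p := p) (q := q) n 1
  simp only [pow_one, Nat.cast_one] at hsym
  have hslc := walk_isSLC hp0 hp1 hq0 hq1 n 0 0 le_rfl
  norm_num at hslc
  have hg0 := walk_nonneg hp0 hp1 hq0 hq1 n 0
  have hg1 := walk_nonneg hp0 hp1 hq0 hq1 n 1
  have hgm1 := walk_nonneg hp0 hp1 hq0 hq1 n (-1)
  have hb : 0 ≤ q*(1-p) := mul_nonneg hq0 (by linarith)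
  have ha : 0 ≤ p*(1-q) := mul_nonneg hp0 (by linarith)
  have hba : q*(1-p) ≤ p*(1-q) := by nlinarith
  -- (b g(-1))^2 = (b g(-1)) (a g 1) = ab g(-1) g1 ≤ ab g0^2 ≤ a^2 g0^2
  have h1 : (q*(1-p) * walk p q n (-1))^2 ≤ (p*(1-q) * walk p q n 0)^2 := by
    calc (q*(1-p) * walk p q n (-1))^2
        = (q*(1-p)) * (p*(1-q)) * (walk p q n (-1) * walk p q n 1) := by
          linear_combination (q*(1-p)*walk p q n (-1)) * hsym
      _ ≤ (q*(1-p)) * (p*(1-q)) * (walk p q n 0 * walk p q n 0) := by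
          apply mul_le_mul_of_nonneg_left _ (mul_nonneg hb ha)
          calc walk p q n (-1) * walk p q n 1 = walk p q n (0-1) * walk p q n (0+1) := by norm_num
            _ ≤ walk p q n 0 * walk p q n 0 := walk_isSLC hp0 hp1 hq0 hq1 n 0 0 le_rfl
      _ ≤ (p*(1-q) * walk p q n 0)^2 := by
          nlinarith [mul_le_mul_of_nonneg_right hba (mul_nonneg ha (mul_nonneg hg0 hg0))]
  have h2 : 0 ≤ q*(1-p) * walk p q n (-1) := mul_nonneg hb hgm1
  have h3 : 0 ≤ p*(1-q) * walk p q n 0 := mul_nonneg ha hg0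
  nlinarith

lemma sum_Icc_shift (F : ℤ → ℝ) (a b : ℤ) :
    ∑ ℓ ∈ Finset.Icc (a+1) (b+1), F ℓ = ∑ ℓ ∈ Finset.Icc a b, F (ℓ+1) := by
  rw [← Finset.map_add_right_Icc a b 1, Finset.sum_map]
  rfl

noncomputable def Qw (p q : ℝ) (n : ℕ) (x : ℤ) : ℝ := ∑ ℓ ∈ Finset.Icc x (n:ℤ), walk p q n ℓ

lemma Qw_ext {p q : ℝ} (n : ℕ) (x d : ℤ) (hd : (n:ℤ) ≤ d) :
    ∑ ℓ ∈ Finset.Icc x d, walk p q n ℓ = Qw p q n x := by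
  rw [Qw]
  symm
  apply Finset.sum_subset
  · apply Finset.Icc_subset_Icc_right hd
  · intro ℓ hℓ hℓ'
    simp only [Finset.mem_Icc] at hℓ hℓ'
    exact walk_support_pos n ℓ (by omega)

lemma Qw_succ {p q : ℝ} (n : ℕ) (x : ℤ) :
    Qw p q (n+1) x = p*(1-q) * Qw p q n (x+1) + ((1-p)*(1-q) + p*q) * Qw p q n x
      + q*(1-p) * Qw p q n (x-1) := by
  have hcast : ((n+1 : ℕ) : ℤ) = (n:ℤ) + 1 := by push_cast; ring
  rw [Qw, hcast]
  have expand : ∀ ℓ ∈ Finset.Icc x ((n:ℤ)+1), walk p q (n+1) ℓ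
      = p*(1-q) * walk p q n (ℓ+1) + ((1-p)*(1-q) + p*q) * walk p q n ℓ
        + q*(1-p) * walk p q n (ℓ-1) := fun ℓ _ => walk_succ p q n ℓ
  rw [Finset.sum_congr rfl expand]
  rw [Finset.sum_add_distrib, Finset.sum_add_distrib, ← Finset.mul_sum, ← Finset.mul_sum,
    ← Finset.mul_sum]
  congr 1
  · congr 1
    · -- ∑_{Icc x (n+1)} walk n (ℓ+1) = Qw n (x+1)
      congr 1
      rw [← sum_Icc_shift (walk p q n) x ((n:ℤ)+1), Qw_ext n (x+1) ((n:ℤ)+1+1) (by omega)]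
    · congr 1
      exact Qw_ext n x ((n:ℤ)+1) (by omega)
  · congr 1
    have e : Finset.Icc x ((n:ℤ)+1) = Finset.Icc ((x-1)+1) ((n:ℤ)+1) := by norm_num
    rw [e, sum_Icc_shift (fun ℓ => walk p q n (ℓ-1)) (x-1) ((n:ℤ))]
    simp only [add_sub_cancel_right]
    rfl

lemma Qw_nonneg {p q : ℝ} (hp0 : 0 ≤ p) (hp1 : p ≤ 1) (hq0 : 0 ≤ q) (hq1 : q ≤ 1)
    (n : ℕ) (x : ℤ) : 0 ≤ Qw p q n x :=
  Finset.sum_nonneg fun ℓ _ => walk_nonneg hp0 hp1 hq0 hq1 n ℓ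

lemma Qw_antitone {p q : ℝ} (hp0 : 0 ≤ p) (hp1 : p ≤ 1) (hq0 : 0 ≤ q) (hq1 : q ≤ 1)
    (n : ℕ) {x y : ℤ} (hxy : x ≤ y) : Qw p q n y ≤ Qw p q n x := by
  apply Finset.sum_le_sum_of_subset_of_nonneg (Finset.Icc_subset_Icc_left hxy)
  intro ℓ _ _
  exact walk_nonneg hp0 hp1 hq0 hq1 n ℓ
lemma Qw_zero {p q : ℝ} (y : ℤ) : Qw p q 0 y = if y ≤ 0 then 1 else 0 := by
  rw [Qw]
  rcases le_or_gt y 0 with hy | hy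
  · rw [if_pos hy]
    rw [show (((0:ℕ)):ℤ) = 0 by norm_num]
    rw [Finset.sum_eq_single 0]
    · rfl
    · intro b hb hb0
      exact if_neg hb0
    · intro hb
      simp only [Finset.mem_Icc] at hb
      omega
  · rw [if_neg (by omega)]
    apply Finset.sum_eq_zero
    intro ℓ hℓ
    simp only [Finset.mem_Icc] at hℓ
    show delta ℓ = 0
    rw [delta, if_neg (by omega)]

lemma Qw_diag_step {p q : ℝ} (hp0 : 0 ≤ p) (hp1 : p ≤ 1) (hq0 : 0 ≤ q) (hq1 : q ≤ 1)
    (hqp : q ≤ p) (n : ℕ) : Qw p q (n+1) 0 ≤ Qw p q n 0 := by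
  rw [Qw_succ]
  have h1 : Qw p q n 0 = walk p q n 0 + Qw p q n 1 := by
    rw [Qw, Qw, show Finset.Icc (0:ℤ) (n:ℤ) = insert 0 (Finset.Icc 1 (n:ℤ)) by
      ext z; simp only [Finset.mem_insert, Finset.mem_Icc]; omega]
    rw [Finset.sum_insert (by simp)]
  have h2 : Qw p q n (-1) = walk p q n (-1) + Qw p q n 0 := by
    rw [Qw, Qw, show Finset.Icc (-1:ℤ) (n:ℤ) = insert (-1) (Finset.Icc 0 (n:ℤ)) by
      ext z; simp only [Finset.mem_insert, Finset.mem_Icc]; omega]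
    rw [Finset.sum_insert (by simp)]
  have e01 : (0:ℤ) + 1 = 1 := by norm_num
  have e0m : (0:ℤ) - 1 = -1 := by norm_num
  have hQ1 : Qw p q n 1 = Qw p q n 0 - walk p q n 0 := by linarith
  rw [e01, e0m, h2, hQ1]
  have hk := key_ineq hp0 hp1 hq0 hq1 hqp n
  nlinarith [hk]

lemma Qw_diag_mono {p q : ℝ} (hp0 : 0 ≤ p) (hp1 : p ≤ 1) (hq0 : 0 ≤ q) (hq1 : q ≤ 1)
    (hqp : q ≤ p) {n m : ℕ} (h : n ≤ m) : Qw p q m 0 ≤ Qw p q n 0 := by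
  induction m with
  | zero => simp_all
  | succ m ih =>
    rcases Nat.lt_or_ge n (m+1) with hlt | hge
    · exact le_trans (Qw_diag_step hp0 hp1 hq0 hq1 hqp m) (ih (by omega))
    · have : n = m+1 := by omega
      subst this; rfl

lemma Qw_supermul {p q : ℝ} (hp0 : 0 ≤ p) (hp1 : p ≤ 1) (hq0 : 0 ≤ q) (hq1 : q ≤ 1)
    (s : ℕ) (x : ℤ) : ∀ (t : ℕ) (y : ℤ), Qw p q s x * Qw p q t y ≤ Qw p q (s+t) (x+y) := by
  intro t
  induction t with
  | zero =>
    intro y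
    rw [Qw_zero]
    rcases le_or_gt y 0 with hy | hy
    · rw [if_pos hy, mul_one]
      exact Qw_antitone hp0 hp1 hq0 hq1 s (by omega)
    · rw [if_neg (by omega), mul_zero]
      exact Qw_nonneg hp0 hp1 hq0 hq1 _ _
  | succ t ih =>
    intro y
    have e : s + (t+1) = (s+t) + 1 := by omega
    rw [e, Qw_succ, Qw_succ]
    have i1 := ih (y+1)
    have i2 := ih y
    have i3 := ih (y-1)
    have hQs := Qw_nonneg hp0 hp1 hq0 hq1 s x
    have ha : (0:ℝ) ≤ p*(1-q) := mul_nonneg hp0 (by linarith)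
    have hb : (0:ℝ) ≤ q*(1-p) := mul_nonneg hq0 (by linarith)
    have hc : (0:ℝ) ≤ (1-p)*(1-q) + p*q :=
      add_nonneg (mul_nonneg (by linarith) (by linarith)) (mul_nonneg hp0 hq0)
    have e1 : x + y + 1 = x + (y+1) := by ring
    have e2 : x + y - 1 = x + (y-1) := by ring
    rw [e1, e2]
    calc Qw p q s x * (p*(1-q) * Qw p q t (y+1) + ((1-p)*(1-q) + p*q) * Qw p q t y
          + q*(1-p) * Qw p q t (y-1))
        = p*(1-q) * (Qw p q s x * Qw p q t (y+1))
          + ((1-p)*(1-q) + p*q) * (Qw p q s x * Qw p q t y)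
          + q*(1-p) * (Qw p q s x * Qw p q t (y-1)) := by ring
      _ ≤ p*(1-q) * Qw p q (s+t) (x+(y+1)) + ((1-p)*(1-q) + p*q) * Qw p q (s+t) (x+y)
          + q*(1-p) * Qw p q (s+t) (x+(y-1)) := by
          gcongr
      _ = _ := by rw [show x + y = x + y from rfl]

lemma Qw_pow {p q : ℝ} (hp0 : 0 ≤ p) (hp1 : p ≤ 1) (hq0 : 0 ≤ q) (hq1 : q ≤ 1)
    (m : ℕ) : ∀ k : ℕ, (Qw p q m 0)^k ≤ Qw p q (k*m) 0 := by
  intro k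
  induction k with
  | zero => simp [Qw_zero]
  | succ k ih =>
    have h := Qw_supermul hp0 hp1 hq0 hq1 (k*m) 0 m 0
    have e : (k+1)*m = k*m + m := by ring
    rw [e]
    calc (Qw p q m 0)^(k+1) = (Qw p q m 0)^k * Qw p q m 0 := by ring
      _ ≤ Qw p q (k*m) 0 * Qw p q m 0 := by
          apply mul_le_mul_of_nonneg_right ih (Qw_nonneg hp0 hp1 hq0 hq1 _ _)
      _ ≤ Qw p q (k*m + m) (0 + 0) := h
      _ = Qw p q (k*m + m) 0 := by norm_num
noncomputable def Bz (n : ℕ) (p : ℝ) (z : ℤ) : ℝ :=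
  if 0 ≤ z ∧ z ≤ (n:ℤ) then binomProb n p z.toNat else 0

lemma Bz_natCast (n : ℕ) (p : ℝ) (j : ℕ) : Bz n p (j:ℤ) = binomProb n p j := by
  rw [Bz]
  rcases le_or_gt j n with hj | hj
  · rw [if_pos ⟨by positivity, by exact_mod_cast hj⟩, Int.toNat_natCast]
  · rw [if_neg (by push_cast; omega), binomProb, Nat.choose_eq_zero_of_lt hj]
    norm_num

lemma Bz_neg (n : ℕ) (p : ℝ) (z : ℤ) (h : z < 0) : Bz n p z = 0 := by
  rw [Bz, if_neg (by omega)]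

lemma Bz_gt (n : ℕ) (p : ℝ) (z : ℤ) (h : (n:ℤ) < z) : Bz n p z = 0 := by
  rw [Bz, if_neg (by omega)]

lemma Bz_pascal (n : ℕ) (p : ℝ) (z : ℤ) :
    Bz (n+1) p z = (1-p) * Bz n p z + p * Bz n p (z-1) := by
  rcases lt_or_ge z 0 with hz | hz
  · rw [Bz_neg _ _ _ hz, Bz_neg _ _ _ hz, Bz_neg _ _ _ (by omega)]
    ring
  rcases lt_or_ge ((n:ℤ)+1) z with hz2 | hz2
  · rw [Bz_gt _ _ _ (by push_cast; omega), Bz_gt _ _ _ (by omega), Bz_gt _ _ _ (by omega)]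
    ring
  -- 0 ≤ z ≤ n+1
  obtain ⟨k, rfl⟩ : ∃ k : ℕ, z = (k:ℤ) := ⟨z.toNat, (Int.toNat_of_nonneg hz).symm⟩
  have hkn : k ≤ n + 1 := by exact_mod_cast hz2
  rw [Bz_natCast]
  match k with
  | 0 =>
    rw [Bz_natCast n p 0, Bz_neg n p (((0:ℕ):ℤ) - 1) (by norm_num)]
    simp [binomProb]
    ring
  | (k+1) =>
    rw [show ((k+1:ℕ):ℤ) - 1 = ((k:ℕ):ℤ) by push_cast; ring, Bz_natCast, Bz_natCast]
    rcases Nat.lt_or_ge k n with hk | hk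
    · -- 1 ≤ k+1 ≤ n
      rw [binomProb, binomProb, binomProb]
      rw [Nat.choose_succ_succ' (n) (k)]
      push_cast
      have e2 : n - k = (n - (k+1)) + 1 := by omega
      rw [e2]
      ring
    · -- k ≥ n, so k+1 = n+1
      have hk1 : k = n := by omega
      subst hk1
      rw [binomProb, binomProb, binomProb]
      rw [Nat.choose_self, Nat.choose_succ_self, Nat.choose_self]
      have e1 : k + 1 - (k+1) = 0 := by omega
      have e2 : k - k = 0 := by omega
      rw [e1, e2]
      push_cast
      ring
noncomputable def W2 (p q : ℝ) (n : ℕ) (ℓ : ℤ) : ℝ :=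
  ∑ j ∈ Finset.Icc (0:ℤ) (n:ℤ), Bz n p j * Bz n q (j + ℓ)

lemma W2_succ_aux (p q : ℝ) (n : ℕ) (G : ℤ → ℝ)
    (hG : ∀ j, j < 0 → G j = 0) (hG2 : ∀ j, (n:ℤ) < j → G j = 0) :
    ∑ j ∈ Finset.Icc (0:ℤ) ((n:ℤ)+1), G j = ∑ j ∈ Finset.Icc (0:ℤ) (n:ℤ), G j := by
  symm
  apply Finset.sum_subset
  · apply Finset.Icc_subset_Icc_right (by omega)
  · intro j hj hj'
    simp only [Finset.mem_Icc] at hj hj'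
    exact hG2 j (by omega)

lemma walk_eq_W2 (p q : ℝ) (n : ℕ) (ℓ : ℤ) : walk p q n ℓ = W2 p q n ℓ := by
  induction n generalizing ℓ with
  | zero =>
    rw [W2, show ((0:ℕ):ℤ) = 0 by norm_num, Finset.Icc_self, Finset.sum_singleton]
    rw [show Bz 0 p 0 = 1 by rw [Bz]; norm_num [binomProb]]
    rw [one_mul, zero_add, Bz]
    show delta ℓ = _
    rw [delta]
    rcases eq_or_ne ℓ 0 with rfl | h0
    · norm_num [binomProb]
    · rw [if_neg h0, if_neg (by omega)]
  | succ n ih =>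
    rw [walk_succ, ih, ih, ih]
    have hcast : ((n+1:ℕ):ℤ) = (n:ℤ)+1 := by push_cast; ring
    conv_rhs => rw [W2, hcast]
    have expand : ∀ j ∈ Finset.Icc (0:ℤ) ((n:ℤ)+1),
        Bz (n+1) p j * Bz (n+1) q (j + ℓ)
        = (1-p)*(1-q) * (Bz n p j * Bz n q (j+ℓ))
          + (1-p)*q * (Bz n p j * Bz n q (j+ℓ-1))
          + p*(1-q) * (Bz n p (j-1) * Bz n q (j+ℓ))
          + p*q * (Bz n p (j-1) * Bz n q (j+ℓ-1)) := by
      intro j _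
      rw [Bz_pascal, Bz_pascal]
      have e : j + ℓ - 1 = j + ℓ - 1 := rfl
      ring
    rw [Finset.sum_congr rfl expand]
    rw [Finset.sum_add_distrib, Finset.sum_add_distrib, Finset.sum_add_distrib,
      ← Finset.mul_sum, ← Finset.mul_sum, ← Finset.mul_sum, ← Finset.mul_sum]
    -- S1
    have S1 : ∑ j ∈ Finset.Icc (0:ℤ) ((n:ℤ)+1), Bz n p j * Bz n q (j+ℓ) = W2 p q n ℓ := by
      rw [W2_succ_aux p q n _ (fun j hj => by rw [Bz_neg n p j hj, zero_mul])
        (fun j hj => by rw [Bz_gt n p j hj, zero_mul])]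
      rfl
    have S2 : ∑ j ∈ Finset.Icc (0:ℤ) ((n:ℤ)+1), Bz n p j * Bz n q (j+ℓ-1) = W2 p q n (ℓ-1) := by
      rw [W2_succ_aux p q n _ (fun j hj => by rw [Bz_neg n p j hj, zero_mul])
        (fun j hj => by rw [Bz_gt n p j hj, zero_mul])]
      rw [W2]
      apply Finset.sum_congr rfl
      intro j _
      congr 1
      ring
    have S3 : ∑ j ∈ Finset.Icc (0:ℤ) ((n:ℤ)+1), Bz n p (j-1) * Bz n q (j+ℓ) = W2 p q n (ℓ+1) := by
      have e : Finset.Icc (0:ℤ) ((n:ℤ)+1) = Finset.Icc ((-1:ℤ)+1) ((n:ℤ)+1) := by norm_num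
      rw [e, sum_Icc_shift (fun j => Bz n p (j-1) * Bz n q (j+ℓ)) (-1) (n:ℤ)]
      simp only [add_sub_cancel_right]
      have drop : ∑ j ∈ Finset.Icc (-1:ℤ) (n:ℤ), Bz n p j * Bz n q (j+1+ℓ)
          = ∑ j ∈ Finset.Icc (0:ℤ) (n:ℤ), Bz n p j * Bz n q (j+1+ℓ) := by
        symm
        apply Finset.sum_subset
        · apply Finset.Icc_subset_Icc_left (by omega)
        · intro j hj hj'
          simp only [Finset.mem_Icc] at hj hj'
          rw [Bz_neg n p j (by omega), zero_mul]
      rw [drop, W2]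
      apply Finset.sum_congr rfl
      intro j _
      congr 1
      ring
    have S4 : ∑ j ∈ Finset.Icc (0:ℤ) ((n:ℤ)+1), Bz n p (j-1) * Bz n q (j+ℓ-1) = W2 p q n ℓ := by
      have e : Finset.Icc (0:ℤ) ((n:ℤ)+1) = Finset.Icc ((-1:ℤ)+1) ((n:ℤ)+1) := by norm_num
      rw [e, sum_Icc_shift (fun j => Bz n p (j-1) * Bz n q (j+ℓ-1)) (-1) (n:ℤ)]
      simp only [add_sub_cancel_right]
      have drop : ∑ j ∈ Finset.Icc (-1:ℤ) (n:ℤ), Bz n p j * Bz n q (j+1+ℓ-1)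
          = ∑ j ∈ Finset.Icc (0:ℤ) (n:ℤ), Bz n p j * Bz n q (j+1+ℓ-1) := by
        symm
        apply Finset.sum_subset
        · apply Finset.Icc_subset_Icc_left (by omega)
        · intro j hj hj'
          simp only [Finset.mem_Icc] at hj hj'
          rw [Bz_neg n p j (by omega), zero_mul]
      rw [drop, W2]
      apply Finset.sum_congr rfl
      intro j _
      congr 1
      ring
    rw [S1, S2, S3, S4]
    ring
lemma sum_Icc_shift' (F : ℤ → ℝ) (a b c : ℤ) :
    ∑ k ∈ Finset.Icc (a+c) (b+c), F k = ∑ ℓ ∈ Finset.Icc a b, F (ℓ+c) := by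
  rw [← Finset.map_add_right_Icc a b c, Finset.sum_map]
  rfl

lemma sum_Icc_eq_range (F : ℤ → ℝ) (n : ℕ) :
    ∑ j ∈ Finset.Icc (0:ℤ) (n:ℤ), F j = ∑ j ∈ Finset.range (n+1), F (j:ℤ) := by
  induction n with
  | zero => simp
  | succ n ih =>
    have e : Finset.Icc (0:ℤ) ((n+1:ℕ):ℤ) = insert ((n+1:ℕ):ℤ) (Finset.Icc (0:ℤ) (n:ℤ)) := by
      ext z; simp only [Finset.mem_insert, Finset.mem_Icc]; push_cast; omega
    rw [e, Finset.sum_insert (by simp only [Finset.mem_Icc]; push_cast; omega),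
      Finset.sum_range_succ, ih]
    ring

lemma prGE_eq_Qw (p q : ℝ) (n : ℕ) : prGE n p n q = Qw p q n 0 := by
  have step1 : Qw p q n 0 = ∑ j ∈ Finset.Icc (0:ℤ) (n:ℤ),
      ∑ ℓ ∈ Finset.Icc (0:ℤ) (n:ℤ), Bz n p j * Bz n q (j + ℓ) := by
    rw [Qw, Finset.sum_congr rfl (fun ℓ _ => walk_eq_W2 p q n ℓ)]
    rw [Finset.sum_comm]
    rfl
  have step2 : ∀ j ∈ Finset.Icc (0:ℤ) (n:ℤ),
      ∑ ℓ ∈ Finset.Icc (0:ℤ) (n:ℤ), Bz n p j * Bz n q (j + ℓ)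
      = ∑ k ∈ Finset.Icc (0:ℤ) (n:ℤ), (if j ≤ k then Bz n p j * Bz n q k else 0) := by
    intro j hj
    simp only [Finset.mem_Icc] at hj
    rw [← Finset.mul_sum]
    have sh : ∑ ℓ ∈ Finset.Icc (0:ℤ) (n:ℤ), Bz n q (j + ℓ)
        = ∑ k ∈ Finset.Icc ((0:ℤ)+j) ((n:ℤ)+j), Bz n q k := by
      rw [sum_Icc_shift' (Bz n q) 0 (n:ℤ) j]
      apply Finset.sum_congr rfl
      intro ℓ _
      congr 1
      ring
    rw [sh]
    have drop : ∑ k ∈ Finset.Icc ((0:ℤ)+j) ((n:ℤ)+j), Bz n q k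
        = ∑ k ∈ Finset.Icc j (n:ℤ), Bz n q k := by
      symm
      apply Finset.sum_subset
      · intro k hk
        simp only [Finset.mem_Icc] at hk ⊢
        omega
      · intro k hk hk'
        simp only [Finset.mem_Icc] at hk hk'
        exact Bz_gt n q k (by omega)
    rw [drop]
    have filt : Finset.Icc j (n:ℤ) = (Finset.Icc (0:ℤ) (n:ℤ)).filter (fun k => j ≤ k) := by
      ext k
      simp only [Finset.mem_Icc, Finset.mem_filter]
      omega
    rw [filt, Finset.sum_filter, Finset.mul_sum]
    apply Finset.sum_congr rfl
    intro k _
    split <;> ring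
  rw [step1, Finset.sum_congr rfl step2]
  rw [sum_Icc_eq_range (fun j => ∑ k ∈ Finset.Icc (0:ℤ) (n:ℤ), (if j ≤ k then Bz n p j * Bz n q k else 0)) n]
  rw [prGE, prGEshift]
  apply Finset.sum_congr rfl
  intro j _
  rw [sum_Icc_eq_range (fun k => (if (j:ℤ) ≤ k then Bz n p (j:ℤ) * Bz n q k else 0)) n]
  apply Finset.sum_congr rfl
  intro k _
  rw [Bz_natCast, Bz_natCast]
  have : ((j:ℝ) - 0 ≤ (k:ℝ)) ↔ ((j:ℤ) ≤ (k:ℤ)) := by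
    rw [sub_zero]
    constructor
    · intro h'; exact_mod_cast h'
    · intro h'; exact_mod_cast h'
  split_ifs with h1 h2 h2
  · rfl
  · exact absurd (this.mp h1) h2
  · exact absurd (this.mpr h2) h1
  · rfl

lemma binomProb_nonneg_s11 {p : ℝ} (hp0 : 0 ≤ p) (hp1 : p ≤ 1) (n k : ℕ) :
    0 ≤ binomProb n p k := by
  rw [binomProb]
  have : (0:ℝ) ≤ 1 - p := by linarith
  positivity

lemma binomProb_sum {p : ℝ} (n : ℕ) : ∑ j ∈ Finset.range (n+1), binomProb n p j = 1 := by
  have h := add_pow p (1-p) n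
  rw [show p + (1-p) = 1 by ring, one_pow] at h
  rw [h]
  apply Finset.sum_congr rfl
  intro k _
  rw [binomProb]
  ring

lemma prGE_nonneg_s11 {p q : ℝ} (hp0 : 0 ≤ p) (hp1 : p ≤ 1) (hq0 : 0 ≤ q) (hq1 : q ≤ 1)
    (m n : ℕ) : 0 ≤ prGE m p n q := by
  rw [prGE, prGEshift]
  apply Finset.sum_nonneg
  intro j _
  apply Finset.sum_nonneg
  intro k _
  split
  · exact mul_nonneg (binomProb_nonneg_s11 hp0 hp1 m j) (binomProb_nonneg_s11 hq0 hq1 n k)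
  · rfl

lemma prGE_le_one {p q : ℝ} (hp0 : 0 ≤ p) (hp1 : p ≤ 1) (hq0 : 0 ≤ q) (hq1 : q ≤ 1)
    (m n : ℕ) : prGE m p n q ≤ 1 := by
  rw [prGE, prGEshift]
  calc (∑ j ∈ Finset.range (m + 1), ∑ k ∈ Finset.range (n + 1),
        if (j : ℝ) - 0 ≤ (k : ℝ) then binomProb m p j * binomProb n q k else 0)
      ≤ ∑ j ∈ Finset.range (m + 1), ∑ k ∈ Finset.range (n + 1),
        binomProb m p j * binomProb n q k := by
        apply Finset.sum_le_sum
        intro j _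
        apply Finset.sum_le_sum
        intro k _
        split
        · rfl
        · exact mul_nonneg (binomProb_nonneg_s11 hp0 hp1 m j) (binomProb_nonneg_s11 hq0 hq1 n k)
    _ = (∑ j ∈ Finset.range (m + 1), binomProb m p j) * (∑ k ∈ Finset.range (n + 1), binomProb n q k) := by
        rw [Finset.sum_mul_sum]
    _ = 1 := by rw [binomProb_sum, binomProb_sum, one_mul]
lemma P_pow_le {p q : ℝ} (hp0 : 0 ≤ p) (hp1 : p ≤ 1) (hq0 : 0 ≤ q) (hq1 : q ≤ 1)
    (hqp : q ≤ p) {m n K : ℕ} (h : n ≤ K * m) :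
    (Qw p q m 0)^K ≤ Qw p q n 0 :=
  le_trans (Qw_pow hp0 hp1 hq0 hq1 m K) (Qw_diag_mono hp0 hp1 hq0 hq1 hqp h)

theorem P_scaled_size_tendsto_zero
    (p q : ℕ → ℝ) (hp : ∀ n, p n ∈ Set.Icc (0 : ℝ) 1) (hq : ∀ n, q n ∈ Set.Icc (0 : ℝ) 1)
    (h : Tendsto (fun n : ℕ => (n : ℝ) * Pn n (p n) (q n)) atTop (nhds 0)) :
    ∀ α : ℝ, 0 < α →
      Tendsto (fun n : ℕ => Pn ⌊α * (n : ℝ)⌋₊ (p n) (q n)) atTop (nhds 0) := by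
  intro α hα
  rw [Metric.tendsto_atTop]
  intro ε hε
  set K : ℕ := max 1 ⌈2/α⌉₊ with hK
  have hK1 : 1 ≤ K := le_max_left _ _
  have hKα : 2/α ≤ (K:ℝ) := by
    calc 2/α ≤ (⌈2/α⌉₊ : ℝ) := Nat.le_ceil _
      _ ≤ (K:ℝ) := by exact_mod_cast le_max_right _ _
  have hεK : 0 < ε ^ K := by positivity
  rw [Metric.tendsto_atTop] at h
  obtain ⟨N₁, hN₁⟩ := h (ε ^ K) hεK
  use max N₁ ⌈2/α⌉₊ + 1
  intro n hn
  have hnN₁ : N₁ ≤ n := by omega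
  have hn2α : 2/α ≤ (n:ℝ) := by
    have h1 : (⌈2/α⌉₊ : ℕ) ≤ n := by omega
    calc 2/α ≤ (⌈2/α⌉₊ : ℝ) := Nat.le_ceil _
      _ ≤ (n:ℝ) := by exact_mod_cast h1
  have hn1 : 1 ≤ n := by omega
  set P : ℝ := max (p n) (q n) with hP
  set Q : ℝ := min (p n) (q n) with hQ
  have hP0 : 0 ≤ P := le_trans (hp n).1 (le_max_left _ _)
  have hP1 : P ≤ 1 := max_le (hp n).2 (hq n).2
  have hQ0 : 0 ≤ Q := le_min (hp n).1 (hq n).1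
  have hQ1 : Q ≤ 1 := le_trans (min_le_left _ _) (hp n).2
  have hQP : Q ≤ P := min_le_max
  set m : ℕ := ⌊α * (n:ℝ)⌋₊ with hm
  -- α * n ≥ 2
  have hαn2 : 2 ≤ α * n := by
    rw [div_le_iff₀ hα] at hn2α
    linarith [mul_comm α (n:ℝ)]
  have hmlb : α * n / 2 ≤ (m:ℝ) := by
    have h1 : α * n - 1 < (m:ℝ) := by
      have := Nat.sub_one_lt_floor (α * (n:ℝ))
      exact_mod_cast this
    linarith
  have hKm : n ≤ K * m := by
    have h1 : (n:ℝ) ≤ (K:ℝ) * (m:ℝ) := by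
      calc (n:ℝ) = (2/α) * (α * n / 2) := by field_simp
        _ ≤ (K:ℝ) * (m:ℝ) := by
            apply mul_le_mul hKα hmlb (by linarith) (by linarith [hKα, div_pos (by norm_num : (0:ℝ) < 2) hα])
    exact_mod_cast h1
  -- bridge
  have hbridge_m : Pn m (p n) (q n) = Qw P Q m 0 := prGE_eq_Qw P Q m
  have hbridge_n : Pn n (p n) (q n) = Qw P Q n 0 := prGE_eq_Qw P Q n
  have hx0 : 0 ≤ Qw P Q m 0 := Qw_nonneg hP0 hP1 hQ0 hQ1 m 0
  have hpow : (Qw P Q m 0)^K ≤ Qw P Q n 0 := P_pow_le hP0 hP1 hQ0 hQ1 hQP hKm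
  have hy0 : 0 ≤ Qw P Q n 0 := Qw_nonneg hP0 hP1 hQ0 hQ1 n 0
  have hylen : Qw P Q n 0 ≤ (n:ℝ) * Qw P Q n 0 := by
    nlinarith [hy0, (by exact_mod_cast hn1 : (1:ℝ) ≤ (n:ℝ))]
  have hsmall : (n:ℝ) * Pn n (p n) (q n) < ε ^ K := by
    have := hN₁ n hnN₁
    rw [Real.dist_eq, sub_zero] at this
    calc (n:ℝ) * Pn n (p n) (q n) ≤ |(n:ℝ) * Pn n (p n) (q n)| := le_abs_self _
      _ < ε ^ K := this
  have hxK : (Qw P Q m 0)^K < ε ^ K := by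
    calc (Qw P Q m 0)^K ≤ Qw P Q n 0 := hpow
      _ ≤ (n:ℝ) * Qw P Q n 0 := hylen
      _ = (n:ℝ) * Pn n (p n) (q n) := by rw [hbridge_n]
      _ < ε ^ K := hsmall
  have hxε : Qw P Q m 0 < ε := lt_of_pow_lt_pow_left₀ K (le_of_lt hε) hxK
  rw [Real.dist_eq, sub_zero, hbridge_m, abs_of_nonneg hx0]
  exact hxε
end
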